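/- arXiv:1204.5672 — 3 statements merged into one kernel-verified Lean document; each statement's English description precedes it below -/
import Mathlib

section
/- Let M1 *_N M2 be a special amalgam such that M1 and M2 are cancellative and N has the confluence property in both M1 and M2. For i = 1,2, let T_i be a set of representatives, containing 1, of the minimal R_N-classes in M_i. Then every element g of M1 *_N M2 has a unique decomposition g = g1 g2 ⋯ gm h such that h ∈ N, each g_i belongs to either T1 \ {1} or T2 \ {1}, and no two consecutive g_i lie in the same set T_j. -/
namespace PG

variable {M : Type*} [Monoid M]

/-- `LDvd a b` : `a` left-divides `b`. -/
def LDvd (a b : M) : Prop := ∃ c, b = a * c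

/-- `RDvd a b` : `a` right-divides `b`. -/
def RDvd (a b : M) : Prop := ∃ c, b = c * a

/-- A monoid is cancellative if `c * a * d = c * b * d` implies `a = b`. -/
def IsCancellative (M : Type*) [Monoid M] : Prop :=
  ∀ a b c d : M, c * a * d = c * b * d → a = b

/-- A monoid is atomic if it admits a norm `ν : M → ℕ` with `ν a > 0` for `a ≠ 1`
and `ν (a * b) ≥ ν a + ν b`. -/
def IsAtomicMon (M : Type*) [Monoid M] : Prop :=
  ∃ ν : M → ℕ, (∀ a : M, a ≠ 1 → 0 < ν a) ∧ ∀ a b : M, ν a + ν b ≤ ν (a * b)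

/-- `m` is the least common multiple of `a` and `b` for left-divisibility. -/
def IsLcmL (a b m : M) : Prop :=
  LDvd a m ∧ LDvd b m ∧ ∀ c : M, LDvd a c → LDvd b c → LDvd m c

/-- `m` is the least common multiple of `a` and `b` for right-divisibility. -/
def IsLcmR (a b m : M) : Prop :=
  RDvd a m ∧ RDvd b m ∧ ∀ c : M, RDvd a c → RDvd b c → RDvd m c

/-- `d` is the greatest common left-divisor of `a` and `b`. -/
def IsGcdL (a b d : M) : Prop :=
  LDvd d a ∧ LDvd d b ∧ ∀ c : M, LDvd c a → LDvd c b → LDvd c d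

/-- `d` is the greatest common right-divisor of `a` and `b`. -/
def IsGcdR (a b d : M) : Prop :=
  RDvd d a ∧ RDvd d b ∧ ∀ c : M, RDvd c a → RDvd c b → RDvd c d

/-- A preGarside monoid: cancellative, atomic, and any two elements admitting a
common multiple (on the appropriate side) admit a least one. -/
def IsPreGarside (M : Type*) [Monoid M] : Prop :=
  IsCancellative M ∧ IsAtomicMon M ∧
    (∀ a b : M, (∃ c, LDvd a c ∧ LDvd b c) → ∃ m, IsLcmL a b m) ∧
    (∀ a b : M, (∃ c, RDvd a c ∧ RDvd b c) → ∃ m, IsLcmR a b m)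

/-- A submonoid is special if it is closed under factors. -/
def IsSpecial (N : Submonoid M) : Prop := ∀ a b : M, a * b ∈ N → a ∈ N ∧ b ∈ N

/-- A (standard) parabolic submonoid: special and closed under all existing lcms. -/
def IsParabolic (N : Submonoid M) : Prop :=
  IsSpecial N ∧ (∀ a b m : M, a ∈ N → b ∈ N → IsLcmL a b m → m ∈ N) ∧
    ∀ a b m : M, a ∈ N → b ∈ N → IsLcmR a b m → m ∈ N

/-- `b` is a factor of `a`. -/
def Factor (b a : M) : Prop := ∃ c d : M, a = c * b * d

/-- The set of factors of `a`. -/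
def Factors (a : M) : Set M := {b | Factor b a}

/-- An element is balanced when its left-divisors and right-divisors coincide. -/
def IsBalanced (a : M) : Prop := {b : M | LDvd b a} = {b : M | RDvd b a}

/-- A Garside element: balanced, and its factors generate the monoid. -/
def IsGarsideElt (Δ : M) : Prop := IsBalanced Δ ∧ Submonoid.closure (Factors Δ) = ⊤

/-- A Garside monoid: a preGarside monoid possessing a Garside element. -/
def IsGarside (M : Type*) [Monoid M] : Prop := IsPreGarside M ∧ ∃ Δ : M, IsGarsideElt Δ

/-- The factors of `a` computed inside the submonoid `N`. -/
def FactorsIn (N : Submonoid M) (a : M) : Set M :=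
  {b | b ∈ N ∧ ∃ c ∈ N, ∃ d ∈ N, a = c * b * d}

/-- `Δ` is a Garside element of the submonoid `N`: it is balanced in `N` and its
factors in `N` generate `N`. -/
def IsGarsideEltIn (N : Submonoid M) (Δ : M) : Prop :=
  Δ ∈ N ∧ ({b : M | b ∈ N ∧ ∃ c ∈ N, Δ = b * c} = {b : M | b ∈ N ∧ ∃ c ∈ N, Δ = c * b}) ∧
    Submonoid.closure (FactorsIn N Δ) = N

/-- The right coset `g * N` (an `R_N`-class). -/
def RCoset (N : Submonoid M) (g : M) : Set M := {x | ∃ h ∈ N, x = g * h}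

/-- The left coset `N * g` (an `L_N`-class). -/
def LCoset (N : Submonoid M) (g : M) : Set M := {x | ∃ h ∈ N, x = h * g}

/-- `RReduces N B A` : the `R_N`-class `B` reduces in one step to the `R_N`-class `A`,
i.e. `A = g₁ N`, `B = g₂ N` with `g₂ ∈ g₁ N` and `g₁ ∉ g₂ N`. -/
def RReduces (N : Submonoid M) (B A : Set M) : Prop :=
  ∃ g₁ g₂ : M, A = RCoset N g₁ ∧ B = RCoset N g₂ ∧ g₂ ∈ RCoset N g₁ ∧ g₁ ∉ RCoset N g₂

/-- `LReduces N B A` : the `L_N`-class `B` reduces in one step to the `L_N`-class `A`. -/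
def LReduces (N : Submonoid M) (B A : Set M) : Prop :=
  ∃ g₁ g₂ : M, A = LCoset N g₁ ∧ B = LCoset N g₂ ∧ g₂ ∈ LCoset N g₁ ∧ g₁ ∉ LCoset N g₂

/-- `N` has the `R` confluence property: the reduction rule on `R_N`-classes is
Noetherian and locally confluent. -/
def RConfluence (N : Submonoid M) : Prop :=
  (¬ ∃ f : ℕ → Set M, ∀ n : ℕ, RReduces N (f n) (f (n + 1))) ∧
    ∀ C A B : Set M, RReduces N C A → RReduces N C B →
      ∃ D : Set M, Relation.ReflTransGen (RReduces N) A D ∧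
        Relation.ReflTransGen (RReduces N) B D

/-- `N` has the `L` confluence property. -/
def LConfluence (N : Submonoid M) : Prop :=
  (¬ ∃ f : ℕ → Set M, ∀ n : ℕ, LReduces N (f n) (f (n + 1))) ∧
    ∀ C A B : Set M, LReduces N C A → LReduces N C B →
      ∃ D : Set M, Relation.ReflTransGen (LReduces N) A D ∧
        Relation.ReflTransGen (LReduces N) B D

/-- `N` has the confluence property. -/
def Confluence (N : Submonoid M) : Prop := RConfluence N ∧ LConfluence N

/-- The `R_N`-class `C` is minimal: whenever `g` represents `C` and `g = g' * h` with
`h ∈ N`, one has `g' N = C`. -/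
def IsMinimalRCoset (N : Submonoid M) (C : Set M) : Prop :=
  (∃ g : M, C = RCoset N g) ∧
    ∀ g g' h : M, h ∈ N → C = RCoset N g → g = g' * h → RCoset N g' = C

/-- The `L_N`-class `C` is minimal. -/
def IsMinimalLCoset (N : Submonoid M) (C : Set M) : Prop :=
  (∃ g : M, C = LCoset N g) ∧
    ∀ g g' h : M, h ∈ N → C = LCoset N g → g = h * g' → LCoset N g' = C

/-- The set of atoms of `M`. -/
def AtomSet (M : Type*) [Monoid M] : Set M :=
  {a | a ≠ 1 ∧ ∀ b c : M, a = b * c → b = 1 ∨ c = 1}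

/-- `|x|` : the least number of factors of `Δ` needed to write `x` as a product. -/
noncomputable def lenFactors (Δ x : M) : ℕ :=
  sInf {k | ∃ l : List M, l.length = k ∧ (∀ y ∈ l, y ∈ Factors Δ) ∧ l.prod = x}

section Amalgam

variable {M₁ M₂ N : Type*} [Monoid M₁] [Monoid M₂] [Monoid N]

/-- The congruence on the free product `M₁ ∗ M₂` identifying `ι₁ h` with `ι₂ h`
for every `h ∈ N`. -/
def amalgamCon (ι₁ : N →* M₁) (ι₂ : N →* M₂) : Con (Monoid.Coprod M₁ M₂) :=
  conGen fun a b => ∃ h : N, a = Monoid.Coprod.inl (ι₁ h) ∧ b = Monoid.Coprod.inr (ι₂ h)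

/-- The amalgamated product `M₁ *_N M₂` : the pushout of `ι₁ : N →* M₁` and
`ι₂ : N →* M₂` in the category of monoids. -/
def Amalgam (ι₁ : N →* M₁) (ι₂ : N →* M₂) : Type _ := (amalgamCon ι₁ ι₂).Quotient

instance (ι₁ : N →* M₁) (ι₂ : N →* M₂) : Monoid (Amalgam ι₁ ι₂) :=
  inferInstanceAs (Monoid (amalgamCon ι₁ ι₂).Quotient)

/-- The canonical morphism `M₁ →* M₁ *_N M₂`. -/
def amalgamInl (ι₁ : N →* M₁) (ι₂ : N →* M₂) : M₁ →* Amalgam ι₁ ι₂ :=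
  (amalgamCon ι₁ ι₂).mk'.comp Monoid.Coprod.inl

/-- The canonical morphism `M₂ →* M₁ *_N M₂`. -/
def amalgamInr (ι₁ : N →* M₁) (ι₂ : N →* M₂) : M₂ →* Amalgam ι₁ ι₂ :=
  (amalgamCon ι₁ ι₂).mk'.comp Monoid.Coprod.inr

end Amalgam

/-! ### Auxiliary material for Proposition 3.3 -/

section AbstractRewriting

variable {α : Type*} {R : α → α → Prop}

private theorem aux_newman (wf : WellFounded fun a b => R b a)
    (lc : ∀ C A B, R C A → R C B → ∃ D, Relation.ReflTransGen R A D ∧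
      Relation.ReflTransGen R B D) :
    ∀ C A B, Relation.ReflTransGen R C A → Relation.ReflTransGen R C B →
      ∃ D, Relation.ReflTransGen R A D ∧ Relation.ReflTransGen R B D := by
  intro C
  induction C using WellFounded.induction wf with
  | _ C IH =>
  intro A B hA hB
  rcases hA.cases_head with rfl | ⟨A', hCA', hA'A⟩
  · exact ⟨B, hB, .refl⟩
  rcases hB.cases_head with rfl | ⟨B', hCB', hB'B⟩
  · exact ⟨A, .refl, hA⟩
  obtain ⟨E, hAE, hBE⟩ := lc C A' B' hCA' hCB'
  obtain ⟨F, hAF, hEF⟩ := IH A' hCA' A E hA'A hAE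
  obtain ⟨G, hBG, hFG⟩ := IH B' hCB' B F hB'B (hBE.trans hEF)
  exact ⟨G, hAF.trans hFG, hBG⟩

private theorem aux_exists_normal (wf : WellFounded fun a b => R b a) (C : α) :
    ∃ D, Relation.ReflTransGen R C D ∧ ∀ E, ¬ R D E := by
  induction C using WellFounded.induction wf with
  | _ C IH =>
  by_cases h : ∃ E, R C E
  · obtain ⟨E, hE⟩ := h
    obtain ⟨D, h1, h2⟩ := IH E hE
    exact ⟨D, .head hE h1, h2⟩
  · exact ⟨C, .refl, fun E hE => h ⟨E, hE⟩⟩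

private theorem aux_rtg_eq_of_normal {D E : α} (h : Relation.ReflTransGen R D E)
    (hD : ∀ F, ¬ R D F) : D = E := by
  rcases h.cases_head with rfl | ⟨F, hDF, _⟩
  · rfl
  · exact absurd hDF (hD F)

end AbstractRewriting

section CosetLemmas

variable {M : Type*} [Monoid M] {Nm : Submonoid M}

private theorem aux_mem_rcoset_self (Nm : Submonoid M) (g : M) : g ∈ RCoset Nm g :=
  ⟨1, Nm.one_mem, (mul_one g).symm⟩

private theorem aux_rcoset_eq_of_mem {g g' : M} (h1 : g ∈ RCoset Nm g')
    (h2 : g' ∈ RCoset Nm g) : RCoset Nm g = RCoset Nm g' := by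
  obtain ⟨h, hh, hgh⟩ := h1
  obtain ⟨k, hk, hg'k⟩ := h2
  ext x
  constructor
  · rintro ⟨m, hm, rfl⟩
    exact ⟨h * m, Nm.mul_mem hh hm, by rw [hgh, mul_assoc]⟩
  · rintro ⟨m, hm, rfl⟩
    exact ⟨k * m, Nm.mul_mem hk hm, by rw [hg'k, mul_assoc]⟩

private theorem aux_subset_of_rreduces {B A : Set M} (h : RReduces Nm B A) : B ⊆ A := by
  obtain ⟨g₁, g₂, rfl, rfl, ⟨h, hh, rfl⟩, -⟩ := h
  rintro x ⟨m, hm, rfl⟩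
  exact ⟨h * m, Nm.mul_mem hh hm, mul_assoc _ _ _⟩

private theorem aux_rtg_subset {B A : Set M} (h : Relation.ReflTransGen (RReduces Nm) B A) :
    B ⊆ A := by
  induction h with
  | refl => exact fun _ h => h
  | tail _ hstep ih => exact ih.trans (aux_subset_of_rreduces hstep)

private theorem aux_rtg_coset {g : M} {D : Set M}
    (h : Relation.ReflTransGen (RReduces Nm) (RCoset Nm g) D) : ∃ g₁, D = RCoset Nm g₁ := by
  induction h with
  | refl => exact ⟨g, rfl⟩
  | tail _ hstep _ => obtain ⟨g₁, g₂, rfl, -⟩ := hstep; exact ⟨g₁, rfl⟩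

private theorem aux_wf (hconf : RConfluence Nm) :
    WellFounded (fun A B : Set M => RReduces Nm B A) := by
  classical
  by_contra hwf
  have hA : ∃ a : Set M, ¬ Acc (fun A B : Set M => RReduces Nm B A) a := by
    by_contra h
    push_neg at h
    exact hwf ⟨fun a => h a⟩
  obtain ⟨a, ha⟩ := hA
  have hstep : ∀ x : {a : Set M // ¬ Acc (fun A B : Set M => RReduces Nm B A) a},
      ∃ y : {a : Set M // ¬ Acc (fun A B : Set M => RReduces Nm B A) a},
        RReduces Nm x.1 y.1 := by
    rintro ⟨x, hx⟩
    by_contra hy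
    push_neg at hy
    refine hx (Acc.intro x fun y hy' => ?_)
    by_contra hacc
    exact absurd hy' (hy ⟨y, hacc⟩)
  choose f hf using hstep
  refine hconf.1 ⟨fun n => (f^[n] ⟨a, ha⟩).1, fun n => ?_⟩
  show RReduces Nm (f^[n] ⟨a, ha⟩).1 (f^[n + 1] ⟨a, ha⟩).1
  rw [Function.iterate_succ_apply']
  exact hf _

private theorem aux_minimal_of_no_succ {g : M} (h : ∀ A, ¬ RReduces Nm (RCoset Nm g) A) :
    IsMinimalRCoset Nm (RCoset Nm g) := by
  refine ⟨⟨g, rfl⟩, ?_⟩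
  intro g₀ g' k hk hC hsplit
  by_cases hmem : g' ∈ RCoset Nm g₀
  · rw [hC]
    exact (aux_rcoset_eq_of_mem ⟨k, hk, hsplit⟩ hmem).symm
  · exact absurd (show RReduces Nm (RCoset Nm g) (RCoset Nm g') from
      ⟨g', g₀, rfl, hC, ⟨k, hk, hsplit⟩, hmem⟩) (h _)

private theorem aux_no_succ_of_minimal {C : Set M} (h : IsMinimalRCoset Nm C) :
    ∀ A, ¬ RReduces Nm C A := by
  rintro A ⟨g₁, g₂, rfl, hC, ⟨k, hk, hg₂⟩, hng₁⟩
  refine hng₁ ?_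
  rw [← hC, ← h.2 g₂ g₁ k hk hC hg₂]
  exact aux_mem_rcoset_self _ _

end CosetLemmas

section OneSide

variable {M N : Type*} [Monoid M] [Monoid N]

/-- Bundled hypotheses for one side of the amalgam. -/
private structure Pkg (ι : N →* M) (T : Set M) : Prop where
  inj : Function.Injective ι
  spec : IsSpecial (MonoidHom.mrange ι)
  canc : IsCancellative M
  conf : RConfluence (MonoidHom.mrange ι)
  one_mem : (1 : M) ∈ T
  min : ∀ t ∈ T, IsMinimalRCoset (MonoidHom.mrange ι) (RCoset (MonoidHom.mrange ι) t)
  uniq : ∀ C : Set M, IsMinimalRCoset (MonoidHom.mrange ι) C →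
    ∃! t : M, t ∈ T ∧ RCoset (MonoidHom.mrange ι) t = C

variable {ι : N →* M} {T : Set M}

private theorem Pkg.step_to_rep (_P : Pkg ι T) {g t : M} {n : N} (h : g = t * ι n) :
    Relation.ReflTransGen (RReduces (MonoidHom.mrange ι)) (RCoset (MonoidHom.mrange ι) g)
      (RCoset (MonoidHom.mrange ι) t) := by
  have hg : g ∈ RCoset (MonoidHom.mrange ι) t := ⟨ι n, ⟨n, rfl⟩, h⟩
  by_cases hmem : t ∈ RCoset (MonoidHom.mrange ι) g
  · rw [aux_rcoset_eq_of_mem hg hmem]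
  · exact Relation.ReflTransGen.single ⟨t, g, rfl, rfl, hg, hmem⟩

private theorem Pkg.decomp (P : Pkg ι T) (g : M) :
    ∃! p : M × N, p.1 ∈ T ∧ g = p.1 * ι p.2 := by
  classical
  have wf := aux_wf P.conf
  -- existence
  obtain ⟨D, hCD, hDnorm⟩ := aux_exists_normal wf (RCoset (MonoidHom.mrange ι) g)
  obtain ⟨g₀, rfl⟩ := aux_rtg_coset hCD
  have hmin := aux_minimal_of_no_succ (fun A => hDnorm A)
  obtain ⟨t, ⟨htT, htC⟩, -⟩ := P.uniq _ hmin
  have hgD : g ∈ RCoset (MonoidHom.mrange ι) t := by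
    rw [htC]; exact aux_rtg_subset hCD (aux_mem_rcoset_self _ _)
  obtain ⟨h, ⟨n, rfl⟩, hgh⟩ := hgD
  refine ⟨(t, n), ⟨htT, hgh⟩, ?_⟩
  -- uniqueness
  rintro ⟨t', n'⟩ ⟨ht'T, hg'⟩
  have h1 := P.step_to_rep hg'
  have h2 := P.step_to_rep hgh
  have hmint' := P.min t' ht'T
  have hmint := P.min t htT
  obtain ⟨E, hE1, hE2⟩ := aux_newman wf P.conf.2 _ _ _ h1 h2
  have e1 : RCoset (MonoidHom.mrange ι) t' = E :=
    aux_rtg_eq_of_normal hE1 (aux_no_succ_of_minimal hmint')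
  have e2 : RCoset (MonoidHom.mrange ι) t = E :=
    aux_rtg_eq_of_normal hE2 (aux_no_succ_of_minimal hmint)
  have hCeq : RCoset (MonoidHom.mrange ι) t' = RCoset (MonoidHom.mrange ι) t := by
    rw [e1, e2]
  obtain ⟨t₀, -, ht₀⟩ := P.uniq _ hmint
  have ht'eq : t' = t := by
    rw [ht₀ t' ⟨ht'T, hCeq⟩, ht₀ t ⟨htT, rfl⟩]
  subst ht'eq
  have : ι n' = ι n := P.canc (ι n') (ι n) t' 1 (by rw [mul_one, mul_one, ← hg', ← hgh])
  rw [P.inj this]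

open Classical in
/-- The canonical decomposition `g = t * ι h`, `t ∈ T`, `h ∈ N`. -/
private noncomputable def dcp (ι : N →* M) (T : Set M) (g : M) : M × N :=
  if h : ∃ p : M × N, p.1 ∈ T ∧ g = p.1 * ι p.2 then h.choose else (1, 1)

private theorem Pkg.dcp_eq (P : Pkg ι T) {g t : M} {n : N} (ht : t ∈ T)
    (he : g = t * ι n) : dcp ι T g = (t, n) := by
  classical
  have hex : ∃ p : M × N, p.1 ∈ T ∧ g = p.1 * ι p.2 := ⟨(t, n), ht, he⟩
  rw [dcp, dif_pos hex]
  exact (P.decomp g).unique hex.choose_spec ⟨ht, he⟩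

private theorem Pkg.dcp_spec (P : Pkg ι T) (g : M) :
    (dcp ι T g).1 ∈ T ∧ g = (dcp ι T g).1 * ι (dcp ι T g).2 := by
  classical
  obtain ⟨⟨t, n⟩, ⟨ht, he⟩, -⟩ := P.decomp g
  rw [P.dcp_eq ht he]
  exact ⟨ht, he⟩

private theorem Pkg.dcp_mem (P : Pkg ι T) {t : M} (ht : t ∈ T) : dcp ι T t = (t, 1) :=
  P.dcp_eq ht (by simp)

private theorem Pkg.dcp_range (P : Pkg ι T) (k : N) : dcp ι T (ι k) = (1, k) :=
  P.dcp_eq P.one_mem (by rw [one_mul])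

private theorem Pkg.dcp_fst_ne_one (P : Pkg ι T) {t : M} (ht : t ∈ T) (ht1 : t ≠ 1)
    (x : M) : (dcp ι T (x * t)).1 ≠ 1 := by
  intro h1
  have spec := P.dcp_spec (x * t)
  rw [h1, one_mul] at spec
  have hmem : x * t ∈ MonoidHom.mrange ι := ⟨(dcp ι T (x * t)).2, spec.2.symm⟩
  have htN : t ∈ MonoidHom.mrange ι := (P.spec x t hmem).2
  have hminC := P.min t ht
  have hco : RCoset (MonoidHom.mrange ι) 1 = RCoset (MonoidHom.mrange ι) t :=
    hminC.2 t 1 t htN rfl (one_mul t).symm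
  obtain ⟨t₀, -, ht₀⟩ := P.uniq _ hminC
  exact ht1 (by rw [ht₀ t ⟨ht, rfl⟩, ht₀ 1 ⟨P.one_mem, hco⟩])

private theorem Pkg.dcp_mul (P : Pkg ι T) (a c : M) :
    dcp ι T (a * c) = ((dcp ι T (a * (dcp ι T c).1)).1,
      (dcp ι T (a * (dcp ι T c).1)).2 * (dcp ι T c).2) := by
  refine P.dcp_eq (P.dcp_spec _).1 ?_
  calc a * c = a * ((dcp ι T c).1 * ι (dcp ι T c).2) := by rw [← (P.dcp_spec c).2]
  _ = a * (dcp ι T c).1 * ι (dcp ι T c).2 := (mul_assoc _ _ _).symm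
  _ = (dcp ι T (a * (dcp ι T c).1)).1 * ι (dcp ι T (a * (dcp ι T c).1)).2 *
        ι (dcp ι T c).2 := by rw [← (P.dcp_spec (a * (dcp ι T c).1)).2]
  _ = _ := by rw [mul_assoc, ← map_mul]

end OneSide

section AmalgamAux
set_option linter.unusedSectionVars false

variable {M₁ M₂ N : Type*} [Monoid M₁] [Monoid M₂] [Monoid N]

open Classical in
private noncomputable def pre1 (t : M₁) (l : List (M₁ ⊕ M₂)) : List (M₁ ⊕ M₂) :=
  if t = 1 then l else Sum.inl t :: l

open Classical in
private noncomputable def pre2 (t : M₂) (l : List (M₁ ⊕ M₂)) : List (M₁ ⊕ M₂) :=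
  if t = 1 then l else Sum.inr t :: l

private theorem pre1_one (l : List (M₁ ⊕ M₂)) : pre1 (1 : M₁) l = l := if_pos rfl

private theorem pre1_ne {t : M₁} (h : t ≠ 1) (l : List (M₁ ⊕ M₂)) :
    pre1 t l = Sum.inl t :: l := if_neg h

private theorem pre2_one (l : List (M₁ ⊕ M₂)) : pre2 (1 : M₂) l = l := if_pos rfl

private theorem pre2_ne {t : M₂} (h : t ≠ 1) (l : List (M₁ ⊕ M₂)) :
    pre2 t l = Sum.inr t :: l := if_neg h

variable (ι₁ : N →* M₁) (ι₂ : N →* M₂) (T₁ : Set M₁) (T₂ : Set M₂)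

private noncomputable def rawAct : (M₁ ⊕ M₂) → List (M₁ ⊕ M₂) × N → List (M₁ ⊕ M₂) × N
  | .inl a, ([], h) => (pre1 (dcp ι₁ T₁ (a * ι₁ h)).1 [], (dcp ι₁ T₁ (a * ι₁ h)).2)
  | .inl a, (.inl t :: r, h) =>
      let s := rawAct (.inr (ι₂ (dcp ι₁ T₁ (a * t)).2)) (r, h)
      (pre1 (dcp ι₁ T₁ (a * t)).1 s.1, s.2)
  | .inl a, (.inr t :: r, h) =>
      let q := dcp ι₂ T₂ (ι₂ (dcp ι₁ T₁ a).2 * t)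
      let s := rawAct (.inl (ι₁ q.2)) (r, h)
      (pre1 (dcp ι₁ T₁ a).1 (pre2 q.1 s.1), s.2)
  | .inr a, ([], h) => (pre2 (dcp ι₂ T₂ (a * ι₂ h)).1 [], (dcp ι₂ T₂ (a * ι₂ h)).2)
  | .inr a, (.inr t :: r, h) =>
      let s := rawAct (.inl (ι₁ (dcp ι₂ T₂ (a * t)).2)) (r, h)
      (pre2 (dcp ι₂ T₂ (a * t)).1 s.1, s.2)
  | .inr a, (.inl t :: r, h) =>
      let q := dcp ι₁ T₁ (ι₁ (dcp ι₂ T₂ a).2 * t)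
      let s := rawAct (.inr (ι₂ q.2)) (r, h)
      (pre2 (dcp ι₂ T₂ a).1 (pre1 q.1 s.1), s.2)
termination_by x p => p.1.length
decreasing_by all_goals simp

private theorem rawAct_nil₁ (a : M₁) (h : N) :
    rawAct ι₁ ι₂ T₁ T₂ (.inl a) ([], h) =
      (pre1 (dcp ι₁ T₁ (a * ι₁ h)).1 [], (dcp ι₁ T₁ (a * ι₁ h)).2) := by
  rw [rawAct]

private theorem rawAct_nil₂ (a : M₂) (h : N) :
    rawAct ι₁ ι₂ T₁ T₂ (.inr a) ([], h) =
      (pre2 (dcp ι₂ T₂ (a * ι₂ h)).1 [], (dcp ι₂ T₂ (a * ι₂ h)).2) := by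
  rw [rawAct]

private theorem rawAct_cons₁ (a : M₁) (t : M₁) (r : List (M₁ ⊕ M₂)) (h : N) :
    rawAct ι₁ ι₂ T₁ T₂ (.inl a) (.inl t :: r, h) =
      (pre1 (dcp ι₁ T₁ (a * t)).1
        (rawAct ι₁ ι₂ T₁ T₂ (.inr (ι₂ (dcp ι₁ T₁ (a * t)).2)) (r, h)).1,
       (rawAct ι₁ ι₂ T₁ T₂ (.inr (ι₂ (dcp ι₁ T₁ (a * t)).2)) (r, h)).2) := by
  rw [rawAct]

private theorem rawAct_cons₂ (a : M₂) (t : M₂) (r : List (M₁ ⊕ M₂)) (h : N) :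
    rawAct ι₁ ι₂ T₁ T₂ (.inr a) (.inr t :: r, h) =
      (pre2 (dcp ι₂ T₂ (a * t)).1
        (rawAct ι₁ ι₂ T₁ T₂ (.inl (ι₁ (dcp ι₂ T₂ (a * t)).2)) (r, h)).1,
       (rawAct ι₁ ι₂ T₁ T₂ (.inl (ι₁ (dcp ι₂ T₂ (a * t)).2)) (r, h)).2) := by
  rw [rawAct]

private theorem rawAct_mix₁ (a : M₁) (t : M₂) (r : List (M₁ ⊕ M₂)) (h : N) :
    rawAct ι₁ ι₂ T₁ T₂ (.inl a) (.inr t :: r, h) =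
      (pre1 (dcp ι₁ T₁ a).1
        (rawAct ι₁ ι₂ T₁ T₂ (.inr (ι₂ (dcp ι₁ T₁ a).2)) (.inr t :: r, h)).1,
       (rawAct ι₁ ι₂ T₁ T₂ (.inr (ι₂ (dcp ι₁ T₁ a).2)) (.inr t :: r, h)).2) := by
  conv_lhs => rw [rawAct]
  rw [rawAct_cons₂]

private theorem rawAct_mix₂ (a : M₂) (t : M₁) (r : List (M₁ ⊕ M₂)) (h : N) :
    rawAct ι₁ ι₂ T₁ T₂ (.inr a) (.inl t :: r, h) =
      (pre2 (dcp ι₂ T₂ a).1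
        (rawAct ι₁ ι₂ T₁ T₂ (.inl (ι₁ (dcp ι₂ T₂ a).2)) (.inl t :: r, h)).1,
       (rawAct ι₁ ι₂ T₁ T₂ (.inl (ι₁ (dcp ι₂ T₂ a).2)) (.inl t :: r, h)).2) := by
  conv_lhs => rw [rawAct]
  rw [rawAct_cons₁]

/-- Normality of a pair: all entries in the transversals minus `1`, alternating sides. -/
private def Nor (p : List (M₁ ⊕ M₂) × N) : Prop :=
  (∀ x ∈ p.1, Sum.elim (fun a : M₁ => a ∈ T₁ ∧ a ≠ 1) (fun b : M₂ => b ∈ T₂ ∧ b ≠ 1) x) ∧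
  List.Chain' (fun x y : M₁ ⊕ M₂ => x.isLeft ≠ y.isLeft) p.1

private def HeadL : List (M₁ ⊕ M₂) → Prop
  | [] => True
  | .inl _ :: _ => True
  | .inr _ :: _ => False

private def HeadR : List (M₁ ⊕ M₂) → Prop
  | [] => True
  | .inl _ :: _ => False
  | .inr _ :: _ => True

private theorem headL_pre1 (t : M₁) {l : List (M₁ ⊕ M₂)} (h : HeadL l) :
    HeadL (pre1 t l) := by
  unfold pre1; split
  · exact h
  · trivial

private theorem headR_pre2 (t : M₂) {l : List (M₁ ⊕ M₂)} (h : HeadR l) :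
    HeadR (pre2 t l) := by
  unfold pre2; split
  · exact h
  · trivial

variable {T₁ T₂}

private theorem nor_tail {x : M₁ ⊕ M₂} {r : List (M₁ ⊕ M₂)} {h : N}
    (hn : Nor T₁ T₂ (x :: r, h)) : Nor T₁ T₂ (r, h) :=
  ⟨fun y hy => hn.1 y (List.mem_cons_of_mem _ hy), hn.2.tail⟩

private theorem nor_headL {t : M₂} {r : List (M₁ ⊕ M₂)} {h : N}
    (hn : Nor T₁ T₂ (.inr t :: r, h)) : HeadL r := by
  have := hn.2
  rw [List.Chain', List.isChain_cons] at this
  rcases r with _ | ⟨x | x, r⟩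
  · trivial
  · trivial
  · exact absurd rfl (this.1 (Sum.inr x) rfl)

private theorem nor_headR {t : M₁} {r : List (M₁ ⊕ M₂)} {h : N}
    (hn : Nor T₁ T₂ (.inl t :: r, h)) : HeadR r := by
  have := hn.2
  rw [List.Chain', List.isChain_cons] at this
  rcases r with _ | ⟨x | x, r⟩
  · trivial
  · exact absurd rfl (this.1 (Sum.inl x) rfl)
  · trivial

private theorem nor_head₁ {t : M₁} {r : List (M₁ ⊕ M₂)} {h : N}
    (hn : Nor T₁ T₂ (.inl t :: r, h)) : t ∈ T₁ ∧ t ≠ 1 :=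
  hn.1 (Sum.inl t) List.mem_cons_self

private theorem nor_head₂ {t : M₂} {r : List (M₁ ⊕ M₂)} {h : N}
    (hn : Nor T₁ T₂ (.inr t :: r, h)) : t ∈ T₂ ∧ t ≠ 1 :=
  hn.1 (Sum.inr t) List.mem_cons_self

private theorem nor_pre1 {t : M₁} (ht : t ∈ T₁) {l : List (M₁ ⊕ M₂)} {h : N}
    (hn : Nor T₁ T₂ (l, h)) (hl : HeadR l) : Nor T₁ T₂ (pre1 t l, h) := by
  by_cases hne : t = 1
  · simp only [pre1, if_pos hne]; exact hn
  · simp only [pre1, if_neg hne]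
    refine ⟨?_, ?_⟩
    · intro x hx
      rcases List.mem_cons.1 hx with rfl | hx
      · exact ⟨ht, hne⟩
      · exact hn.1 x hx
    · rw [List.Chain', List.isChain_cons]
      refine ⟨?_, hn.2⟩
      intro b hb
      rcases l with _ | ⟨y | y, l⟩
      · simp at hb
      · exact absurd hl (by simp [HeadR])
      · simp at hb
        subst hb
        simp

private theorem nor_pre2 {t : M₂} (ht : t ∈ T₂) {l : List (M₁ ⊕ M₂)} {h : N}
    (hn : Nor T₁ T₂ (l, h)) (hl : HeadL l) : Nor T₁ T₂ (pre2 t l, h) := by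
  by_cases hne : t = 1
  · simp only [pre2, if_pos hne]; exact hn
  · simp only [pre2, if_neg hne]
    refine ⟨?_, ?_⟩
    · intro x hx
      rcases List.mem_cons.1 hx with rfl | hx
      · exact ⟨ht, hne⟩
      · exact hn.1 x hx
    · rw [List.Chain', List.isChain_cons]
      refine ⟨?_, hn.2⟩
      intro b hb
      rcases l with _ | ⟨y | y, l⟩
      · simp at hb
      · simp at hb
        subst hb
        simp
      · exact absurd hl (by simp [HeadL])

private theorem nor_nil (h : N) : Nor T₁ T₂ (([] : List (M₁ ⊕ M₂)), h) := by
  constructor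
  · intro x hx; simp at hx
  · exact List.isChain_nil

end AmalgamAux

section AmalgamAct
set_option linter.unusedSectionVars false
set_option linter.unusedVariables false

variable {M₁ M₂ N : Type*} [Monoid M₁] [Monoid M₂] [Monoid N]
  {ι₁ : N →* M₁} {ι₂ : N →* M₂} {T₁ : Set M₁} {T₂ : Set M₂}

local notation "ACT" => rawAct ι₁ ι₂ T₁ T₂
local notation "D₁" => dcp ι₁ T₁
local notation "D₂" => dcp ι₂ T₂

private theorem headL_pre1_ne {t : M₁} (h : t ≠ 1) (l : List (M₁ ⊕ M₂)) :
    HeadL (pre1 t l) := by simp [pre1, if_neg h, HeadL]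

private theorem headR_pre2_ne {t : M₂} (h : t ≠ 1) (l : List (M₁ ⊕ M₂)) :
    HeadR (pre2 t l) := by simp [pre2, if_neg h, HeadR]

private theorem norm_aux (P₁ : Pkg ι₁ T₁) (P₂ : Pkg ι₂ T₂) :
    ∀ (n : ℕ) (r : List (M₁ ⊕ M₂)) (h : N), r.length ≤ n → Nor T₁ T₂ (r, h) →
      (∀ c : M₂, HeadR r → Nor T₁ T₂ (ACT (.inr c) (r, h)) ∧ HeadR (ACT (.inr c) (r, h)).1) ∧
      (∀ c : M₁, HeadL r → Nor T₁ T₂ (ACT (.inl c) (r, h)) ∧ HeadL (ACT (.inl c) (r, h)).1) := by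
  intro n
  induction n with
  | zero =>
    intro r h hlen hn
    rw [List.length_eq_zero_iff.1 (Nat.le_zero.1 hlen)]
    constructor
    · intro c _
      rw [rawAct_nil₂]
      exact ⟨nor_pre2 (P₂.dcp_spec _).1 (nor_nil _) trivial, headR_pre2 _ trivial⟩
    · intro c _
      rw [rawAct_nil₁]
      exact ⟨nor_pre1 (P₁.dcp_spec _).1 (nor_nil _) trivial, headL_pre1 _ trivial⟩
  | succ n IH =>
    intro r h hlen hn
    rcases r with _ | ⟨u | u, r⟩
    · constructor
      · intro c _
        rw [rawAct_nil₂]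
        exact ⟨nor_pre2 (P₂.dcp_spec _).1 (nor_nil _) trivial, headR_pre2 _ trivial⟩
      · intro c _
        rw [rawAct_nil₁]
        exact ⟨nor_pre1 (P₁.dcp_spec _).1 (nor_nil _) trivial, headL_pre1 _ trivial⟩
    · -- r = .inl u :: r
      constructor
      · intro c hF
        exact hF.elim
      · intro c _
        rw [rawAct_cons₁]
        have hIH := (IH r h (by simpa using hlen) (nor_tail hn)).1
          (ι₂ (D₁ (c * u)).2) (nor_headR hn)
        have hne : (D₁ (c * u)).1 ≠ 1 :=
          P₁.dcp_fst_ne_one (nor_head₁ hn).1 (nor_head₁ hn).2 c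
        exact ⟨nor_pre1 (P₁.dcp_spec _).1 hIH.1 hIH.2, headL_pre1_ne hne _⟩
    · -- r = .inr u :: r
      constructor
      · intro c _
        rw [rawAct_cons₂]
        have hIH := (IH r h (by simpa using hlen) (nor_tail hn)).2
          (ι₁ (D₂ (c * u)).2) (nor_headL hn)
        have hne : (D₂ (c * u)).1 ≠ 1 :=
          P₂.dcp_fst_ne_one (nor_head₂ hn).1 (nor_head₂ hn).2 c
        exact ⟨nor_pre2 (P₂.dcp_spec _).1 hIH.1 hIH.2, headR_pre2_ne hne _⟩
      · intro c hF
        exact hF.elim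

private theorem act_norm (P₁ : Pkg ι₁ T₁) (P₂ : Pkg ι₂ T₂) (x : M₁ ⊕ M₂)
    (r : List (M₁ ⊕ M₂)) (h : N) (hn : Nor T₁ T₂ (r, h)) :
    Nor T₁ T₂ (ACT x (r, h)) := by
  rcases x with a | a
  · rcases r with _ | ⟨u | u, r⟩
    · rw [rawAct_nil₁]
      exact nor_pre1 (P₁.dcp_spec _).1 (nor_nil _) trivial
    · rw [rawAct_cons₁]
      have hIH := (norm_aux P₁ P₂ r.length r h le_rfl (nor_tail hn)).1
        (ι₂ (D₁ (a * u)).2) (nor_headR hn)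
      exact nor_pre1 (P₁.dcp_spec _).1 hIH.1 hIH.2
    · rw [rawAct_mix₁]
      have hIH := (norm_aux P₁ P₂ (.inr u :: r).length (.inr u :: r) h le_rfl hn).1
        (ι₂ (D₁ a).2) trivial
      exact nor_pre1 (P₁.dcp_spec _).1 hIH.1 hIH.2
  · rcases r with _ | ⟨u | u, r⟩
    · rw [rawAct_nil₂]
      exact nor_pre2 (P₂.dcp_spec _).1 (nor_nil _) trivial
    · rw [rawAct_mix₂]
      have hIH := (norm_aux P₁ P₂ (.inl u :: r).length (.inl u :: r) h le_rfl hn).2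
        (ι₁ (D₂ a).2) trivial
      exact nor_pre2 (P₂.dcp_spec _).1 hIH.1 hIH.2
    · rw [rawAct_cons₂]
      have hIH := (norm_aux P₁ P₂ r.length r h le_rfl (nor_tail hn)).2
        (ι₁ (D₂ (a * u)).2) (nor_headL hn)
      exact nor_pre2 (P₂.dcp_spec _).1 hIH.1 hIH.2

private theorem act_one (P₁ : Pkg ι₁ T₁) (P₂ : Pkg ι₂ T₂) :
    ∀ (r : List (M₁ ⊕ M₂)) (h : N), Nor T₁ T₂ (r, h) →
      ACT (.inl (1 : M₁)) (r, h) = (r, h) ∧ ACT (.inr (1 : M₂)) (r, h) = (r, h) := by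
  intro r
  induction r with
  | nil =>
    intro h hn
    constructor
    · rw [rawAct_nil₁, one_mul, P₁.dcp_range]
      simp [pre1]
    · rw [rawAct_nil₂, one_mul, P₂.dcp_range]
      simp [pre2]
  | cons x r IH =>
    intro h hn
    rcases x with u | u
    · have h1 : ACT (.inl (1 : M₁)) (.inl u :: r, h) = (.inl u :: r, h) := by
        rw [rawAct_cons₁, one_mul, P₁.dcp_mem (nor_head₁ hn).1]
        simp only [map_one]
        rw [(IH h (nor_tail hn)).2]
        simp [pre1, (nor_head₁ hn).2]
      refine ⟨h1, ?_⟩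
      rw [rawAct_mix₂, P₂.dcp_mem P₂.one_mem]
      simp only [map_one]
      rw [h1]
      simp [pre2]
    · have h1 : ACT (.inr (1 : M₂)) (.inr u :: r, h) = (.inr u :: r, h) := by
        rw [rawAct_cons₂, one_mul, P₂.dcp_mem (nor_head₂ hn).1]
        simp only [map_one]
        rw [(IH h (nor_tail hn)).1]
        simp [pre2, (nor_head₂ hn).2]
      refine ⟨?_, h1⟩
      rw [rawAct_mix₁, P₁.dcp_mem P₁.one_mem]
      simp only [map_one]
      rw [h1]
      simp [pre1]

private theorem act_pre1 (P₁ : Pkg ι₁ T₁) (P₂ : Pkg ι₂ T₂) (a tb : M₁)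
    (Z : List (M₁ ⊕ M₂) × N) (hZ : HeadR Z.1) :
    ACT (.inl a) (pre1 tb Z.1, Z.2) =
      (pre1 (D₁ (a * tb)).1 (ACT (.inr (ι₂ (D₁ (a * tb)).2)) Z).1,
       (ACT (.inr (ι₂ (D₁ (a * tb)).2)) Z).2) := by
  obtain ⟨l, k⟩ := Z
  dsimp only at hZ ⊢
  by_cases htb : tb = 1
  · subst htb
    rw [mul_one, pre1_one]
    rcases l with _ | ⟨u | u, l⟩
    · rw [rawAct_nil₁, rawAct_nil₂, ← map_mul, P₂.dcp_range]
      have hd : D₁ (a * ι₁ k) = ((D₁ a).1, (D₁ a).2 * k) := by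
        refine P₁.dcp_eq (P₁.dcp_spec a).1 ?_
        rw [map_mul, ← mul_assoc, ← (P₁.dcp_spec a).2]
      rw [hd]
      simp [pre2_one]
    · exact hZ.elim
    · rw [rawAct_mix₁]
  · rw [pre1_ne htb, rawAct_cons₁]

private theorem act_pre2 (P₁ : Pkg ι₁ T₁) (P₂ : Pkg ι₂ T₂) (a tb : M₂)
    (Z : List (M₁ ⊕ M₂) × N) (hZ : HeadL Z.1) :
    ACT (.inr a) (pre2 tb Z.1, Z.2) =
      (pre2 (D₂ (a * tb)).1 (ACT (.inl (ι₁ (D₂ (a * tb)).2)) Z).1,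
       (ACT (.inl (ι₁ (D₂ (a * tb)).2)) Z).2) := by
  obtain ⟨l, k⟩ := Z
  dsimp only at hZ ⊢
  by_cases htb : tb = 1
  · subst htb
    rw [mul_one, pre2_one]
    rcases l with _ | ⟨u | u, l⟩
    · rw [rawAct_nil₂, rawAct_nil₁, ← map_mul, P₁.dcp_range]
      have hd : D₂ (a * ι₂ k) = ((D₂ a).1, (D₂ a).2 * k) := by
        refine P₂.dcp_eq (P₂.dcp_spec a).1 ?_
        rw [map_mul, ← mul_assoc, ← (P₂.dcp_spec a).2]
      rw [hd]
      simp [pre1_one]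
    · rw [rawAct_mix₂]
    · exact hZ.elim
  · rw [pre2_ne htb, rawAct_cons₂]

private theorem act_compat (P₁ : Pkg ι₁ T₁) (P₂ : Pkg ι₂ T₂) (k : N)
    (r : List (M₁ ⊕ M₂)) (h : N) :
    ACT (.inl (ι₁ k)) (r, h) = ACT (.inr (ι₂ k)) (r, h) := by
  rcases r with _ | ⟨u | u, r⟩
  · rw [rawAct_nil₁, rawAct_nil₂, ← map_mul, ← map_mul, P₁.dcp_range, P₂.dcp_range]
    simp [pre1, pre2]
  · rw [rawAct_mix₂ (a := ι₂ k), P₂.dcp_range]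
    simp [pre2]
  · rw [rawAct_mix₁ (a := ι₁ k), P₁.dcp_range]
    simp [pre1]

end AmalgamAct

section AmalgamMul
set_option linter.unusedSectionVars false
set_option linter.unusedVariables false

variable {M₁ M₂ N : Type*} [Monoid M₁] [Monoid M₂] [Monoid N]
  {ι₁ : N →* M₁} {ι₂ : N →* M₂} {T₁ : Set M₁} {T₂ : Set M₂}

local notation "ACT" => rawAct ι₁ ι₂ T₁ T₂
local notation "D₁" => dcp ι₁ T₁
local notation "D₂" => dcp ι₂ T₂

private theorem act_mul_nil₁ (P₁ : Pkg ι₁ T₁) (P₂ : Pkg ι₂ T₂) (h : N) (a b : M₁) :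
    ACT (.inl a) (ACT (.inl b) ([], h)) = ACT (.inl (a * b)) ([], h) := by
  rw [rawAct_nil₁ (a := b)]
  rw [act_pre1 P₁ P₂ a _ (([] : List (M₁ ⊕ M₂)), (D₁ (b * ι₁ h)).2) trivial]
  rw [rawAct_nil₂, ← map_mul, P₂.dcp_range]
  rw [rawAct_nil₁ (a := a * b)]
  rw [mul_assoc a b (ι₁ h), P₁.dcp_mul a (b * ι₁ h)]
  simp [pre2_one]

private theorem act_mul_nil₂ (P₁ : Pkg ι₁ T₁) (P₂ : Pkg ι₂ T₂) (h : N) (a b : M₂) :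
    ACT (.inr a) (ACT (.inr b) ([], h)) = ACT (.inr (a * b)) ([], h) := by
  rw [rawAct_nil₂ (a := b)]
  rw [act_pre2 P₁ P₂ a _ (([] : List (M₁ ⊕ M₂)), (D₂ (b * ι₂ h)).2) trivial]
  rw [rawAct_nil₁, ← map_mul, P₁.dcp_range]
  rw [rawAct_nil₂ (a := a * b)]
  rw [mul_assoc a b (ι₂ h), P₂.dcp_mul a (b * ι₂ h)]
  simp [pre1_one]

private theorem act_mul (P₁ : Pkg ι₁ T₁) (P₂ : Pkg ι₂ T₂) :
    ∀ (n : ℕ) (r : List (M₁ ⊕ M₂)) (h : N), r.length ≤ n → Nor T₁ T₂ (r, h) →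
      (∀ a b : M₁, ACT (.inl a) (ACT (.inl b) (r, h)) = ACT (.inl (a * b)) (r, h)) ∧
      (∀ a b : M₂, ACT (.inr a) (ACT (.inr b) (r, h)) = ACT (.inr (a * b)) (r, h)) := by
  intro n
  induction n with
  | zero =>
    intro r h hlen hn
    rw [List.length_eq_zero_iff.1 (Nat.le_zero.1 hlen)]
    exact ⟨act_mul_nil₁ P₁ P₂ h, act_mul_nil₂ P₁ P₂ h⟩
  | succ n IH =>
    intro r h hlen hn
    rcases r with _ | ⟨u | u, r⟩
    · exact ⟨act_mul_nil₁ P₁ P₂ h, act_mul_nil₂ P₁ P₂ h⟩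
    · -- r = .inl u :: r
      have hnr := nor_tail hn
      have hhr := nor_headR hn
      have IH' := IH r h (by simpa using hlen) hnr
      have C1 : ∀ a b : M₁, ACT (.inl a) (ACT (.inl b) (.inl u :: r, h)) =
          ACT (.inl (a * b)) (.inl u :: r, h) := by
        intro a b
        rw [rawAct_cons₁ (a := b)]
        have hU := (norm_aux P₁ P₂ r.length r h le_rfl hnr).1 (ι₂ (D₁ (b * u)).2) hhr
        rw [act_pre1 P₁ P₂ a _ _ hU.2]
        rw [IH'.2, ← map_mul]
        rw [rawAct_cons₁ (a := a * b)]
        rw [mul_assoc a b u, P₁.dcp_mul a (b * u)]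
      have C2 : ∀ a b : M₂, ACT (.inr a) (ACT (.inr b) (.inl u :: r, h)) =
          ACT (.inr (a * b)) (.inl u :: r, h) := by
        intro a b
        rw [rawAct_mix₂ (a := b)]
        have hZ := (norm_aux P₁ P₂ (.inl u :: r).length (.inl u :: r) h le_rfl hn).2
          (ι₁ (D₂ b).2) trivial
        rw [act_pre2 P₁ P₂ a _ _ hZ.2]
        rw [C1, ← map_mul]
        rw [rawAct_mix₂ (a := a * b)]
        rw [P₂.dcp_mul a b]
      exact ⟨C1, C2⟩
    · -- r = .inr u :: r
      have hnr := nor_tail hn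
      have hhr := nor_headL hn
      have IH' := IH r h (by simpa using hlen) hnr
      have C2 : ∀ a b : M₂, ACT (.inr a) (ACT (.inr b) (.inr u :: r, h)) =
          ACT (.inr (a * b)) (.inr u :: r, h) := by
        intro a b
        rw [rawAct_cons₂ (a := b)]
        have hU := (norm_aux P₁ P₂ r.length r h le_rfl hnr).2 (ι₁ (D₂ (b * u)).2) hhr
        rw [act_pre2 P₁ P₂ a _ _ hU.2]
        rw [IH'.1, ← map_mul]
        rw [rawAct_cons₂ (a := a * b)]
        rw [mul_assoc a b u, P₂.dcp_mul a (b * u)]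
      have C1 : ∀ a b : M₁, ACT (.inl a) (ACT (.inl b) (.inr u :: r, h)) =
          ACT (.inl (a * b)) (.inr u :: r, h) := by
        intro a b
        rw [rawAct_mix₁ (a := b)]
        have hZ := (norm_aux P₁ P₂ (.inr u :: r).length (.inr u :: r) h le_rfl hn).1
          (ι₂ (D₁ b).2) trivial
        rw [act_pre1 P₁ P₂ a _ _ hZ.2]
        rw [C2, ← map_mul]
        rw [rawAct_mix₁ (a := a * b)]
        rw [P₁.dcp_mul a b]
      exact ⟨C1, C2⟩

end AmalgamMul

section AmalgamEmb
set_option linter.unusedSectionVars false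
set_option linter.unusedVariables false

variable {M₁ M₂ N : Type*} [Monoid M₁] [Monoid M₂] [Monoid N]

/-- The evaluation of a decomposition in the amalgam. -/
private def emb (ι₁ : N →* M₁) (ι₂ : N →* M₂) (p : List (M₁ ⊕ M₂) × N) : Amalgam ι₁ ι₂ :=
  (p.1.map (Sum.elim (amalgamInl ι₁ ι₂) (amalgamInr ι₁ ι₂))).prod *
    amalgamInl ι₁ ι₂ (ι₁ p.2)

variable (ι₁ : N →* M₁) (ι₂ : N →* M₂)

private theorem emb_nil (h : N) : emb ι₁ ι₂ ([], h) = amalgamInl ι₁ ι₂ (ι₁ h) := by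
  simp [emb]

private theorem emb_cons (x : M₁ ⊕ M₂) (l : List (M₁ ⊕ M₂)) (h : N) :
    emb ι₁ ι₂ (x :: l, h) =
      Sum.elim (amalgamInl ι₁ ι₂) (amalgamInr ι₁ ι₂) x * emb ι₁ ι₂ (l, h) := by
  simp [emb, mul_assoc]

private theorem amalgam_comm (k : N) :
    amalgamInl ι₁ ι₂ (ι₁ k) = amalgamInr ι₁ ι₂ (ι₂ k) := by
  show ((Monoid.Coprod.inl (ι₁ k) : Monoid.Coprod M₁ M₂) : (amalgamCon ι₁ ι₂).Quotient) =
    ((Monoid.Coprod.inr (ι₂ k) : Monoid.Coprod M₁ M₂) : (amalgamCon ι₁ ι₂).Quotient)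
  exact (Con.eq _).mpr (ConGen.Rel.of _ _ ⟨k, rfl, rfl⟩)

private theorem emb_pre1 (t : M₁) (l : List (M₁ ⊕ M₂)) (h : N) :
    emb ι₁ ι₂ (pre1 t l, h) = amalgamInl ι₁ ι₂ t * emb ι₁ ι₂ (l, h) := by
  by_cases ht : t = 1
  · rw [ht, pre1_one, map_one, one_mul]
  · rw [pre1_ne ht, emb_cons]
    rfl

private theorem emb_pre2 (t : M₂) (l : List (M₁ ⊕ M₂)) (h : N) :
    emb ι₁ ι₂ (pre2 t l, h) = amalgamInr ι₁ ι₂ t * emb ι₁ ι₂ (l, h) := by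
  by_cases ht : t = 1
  · rw [ht, pre2_one, map_one, one_mul]
  · rw [pre2_ne ht, emb_cons]
    rfl

end AmalgamEmb

section AmalgamFinal
set_option linter.unusedSectionVars false
set_option linter.unusedVariables false

variable {M₁ M₂ N : Type*} [Monoid M₁] [Monoid M₂] [Monoid N]
  {ι₁ : N →* M₁} {ι₂ : N →* M₂} {T₁ : Set M₁} {T₂ : Set M₂}

local notation "ACT" => rawAct ι₁ ι₂ T₁ T₂
local notation "D₁" => dcp ι₁ T₁
local notation "D₂" => dcp ι₂ T₂

private theorem emb_act (P₁ : Pkg ι₁ T₁) (P₂ : Pkg ι₂ T₂) :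
    ∀ (r : List (M₁ ⊕ M₂)) (h : N),
      (∀ a : M₁, emb ι₁ ι₂ (ACT (.inl a) (r, h)) = amalgamInl ι₁ ι₂ a * emb ι₁ ι₂ (r, h)) ∧
      (∀ b : M₂, emb ι₁ ι₂ (ACT (.inr b) (r, h)) = amalgamInr ι₁ ι₂ b * emb ι₁ ι₂ (r, h)) := by
  intro r
  induction r with
  | nil =>
    intro h
    constructor
    · intro a
      rw [rawAct_nil₁, emb_pre1, emb_nil, emb_nil,
        ← map_mul (amalgamInl ι₁ ι₂) ((D₁ (a * ι₁ h)).1) (ι₁ (D₁ (a * ι₁ h)).2),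
        ← (P₁.dcp_spec (a * ι₁ h)).2, map_mul]
    · intro b
      rw [rawAct_nil₂, emb_pre2, emb_nil, amalgam_comm ι₁ ι₂ ((D₂ (b * ι₂ h)).2),
        ← map_mul (amalgamInr ι₁ ι₂) ((D₂ (b * ι₂ h)).1) (ι₂ (D₂ (b * ι₂ h)).2),
        ← (P₂.dcp_spec (b * ι₂ h)).2, map_mul, emb_nil, amalgam_comm ι₁ ι₂ h]
  | cons x r IHr =>
    intro h
    rcases x with u | u
    · have E1 : ∀ a : M₁, emb ι₁ ι₂ (ACT (.inl a) (.inl u :: r, h)) =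
          amalgamInl ι₁ ι₂ a * emb ι₁ ι₂ (.inl u :: r, h) := by
        intro a
        rw [rawAct_cons₁, emb_pre1, Prod.mk.eta, (IHr h).2, ← amalgam_comm,
          ← mul_assoc, ← map_mul, ← (P₁.dcp_spec (a * u)).2, emb_cons, map_mul, mul_assoc]
        rfl
      refine ⟨E1, ?_⟩
      intro b
      rw [rawAct_mix₂, emb_pre2, Prod.mk.eta, E1, amalgam_comm, ← mul_assoc,
        ← map_mul, ← (P₂.dcp_spec b).2]
    · have E2 : ∀ b : M₂, emb ι₁ ι₂ (ACT (.inr b) (.inr u :: r, h)) =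
          amalgamInr ι₁ ι₂ b * emb ι₁ ι₂ (.inr u :: r, h) := by
        intro b
        rw [rawAct_cons₂, emb_pre2, Prod.mk.eta, (IHr h).1, amalgam_comm,
          ← mul_assoc, ← map_mul, ← (P₂.dcp_spec (b * u)).2, emb_cons, map_mul, mul_assoc]
        rfl
      refine ⟨?_, E2⟩
      intro a
      rw [rawAct_mix₁, emb_pre1, Prod.mk.eta, E2, ← amalgam_comm, ← mul_assoc,
        ← map_mul, ← (P₁.dcp_spec a).2]

private theorem act_rep₁ (P₁ : Pkg ι₁ T₁) (P₂ : Pkg ι₂ T₂) {u : M₁} (hu : u ∈ T₁)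
    (hu1 : u ≠ 1) (r : List (M₁ ⊕ M₂)) (h : N) (hn : Nor T₁ T₂ (r, h)) (hr : HeadR r) :
    ACT (.inl u) (r, h) = (.inl u :: r, h) := by
  rcases r with _ | ⟨v | v, r⟩
  · rw [rawAct_nil₁]
    have : D₁ (u * ι₁ h) = (u, h) := P₁.dcp_eq hu rfl
    rw [this, pre1_ne hu1]
  · exact hr.elim
  · rw [rawAct_mix₁, P₁.dcp_mem hu]
    simp only [map_one]
    rw [(act_one P₁ P₂ _ h hn).2, pre1_ne hu1]

private theorem act_rep₂ (P₁ : Pkg ι₁ T₁) (P₂ : Pkg ι₂ T₂) {u : M₂} (hu : u ∈ T₂)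
    (hu1 : u ≠ 1) (r : List (M₁ ⊕ M₂)) (h : N) (hn : Nor T₁ T₂ (r, h)) (hr : HeadL r) :
    ACT (.inr u) (r, h) = (.inr u :: r, h) := by
  rcases r with _ | ⟨v | v, r⟩
  · rw [rawAct_nil₂]
    have : D₂ (u * ι₂ h) = (u, h) := P₂.dcp_eq hu rfl
    rw [this, pre2_ne hu1]
  · rw [rawAct_mix₂, P₂.dcp_mem hu]
    simp only [map_one]
    rw [(act_one P₁ P₂ _ h hn).1, pre2_ne hu1]
  · exact hr.elim

/-- The normal-form carrier. -/
private def NF (T₁ : Set M₁) (T₂ : Set M₂) (N : Type*) [Monoid N] :=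
  {p : List (M₁ ⊕ M₂) × N // Nor T₁ T₂ p}

private noncomputable def end1 (P₁ : Pkg ι₁ T₁) (P₂ : Pkg ι₂ T₂) :
    M₁ →* Function.End {p : List (M₁ ⊕ M₂) × N // Nor T₁ T₂ p} where
  toFun a s := ⟨ACT (.inl a) s.1, act_norm P₁ P₂ (.inl a) s.1.1 s.1.2 s.2⟩
  map_one' := by
    funext s
    exact Subtype.ext ((act_one P₁ P₂ s.1.1 s.1.2 s.2).1)
  map_mul' a b := by
    funext s
    exact Subtype.ext
      (((act_mul P₁ P₂ s.1.1.length s.1.1 s.1.2 le_rfl s.2).1 a b).symm)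

private noncomputable def end2 (P₁ : Pkg ι₁ T₁) (P₂ : Pkg ι₂ T₂) :
    M₂ →* Function.End {p : List (M₁ ⊕ M₂) × N // Nor T₁ T₂ p} where
  toFun a s := ⟨ACT (.inr a) s.1, act_norm P₁ P₂ (.inr a) s.1.1 s.1.2 s.2⟩
  map_one' := by
    funext s
    exact Subtype.ext ((act_one P₁ P₂ s.1.1 s.1.2 s.2).2)
  map_mul' a b := by
    funext s
    exact Subtype.ext
      (((act_mul P₁ P₂ s.1.1.length s.1.1 s.1.2 le_rfl s.2).2 a b).symm)

private noncomputable def bigHom (P₁ : Pkg ι₁ T₁) (P₂ : Pkg ι₂ T₂) :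
    Amalgam ι₁ ι₂ →* Function.End {p : List (M₁ ⊕ M₂) × N // Nor T₁ T₂ p} :=
  (amalgamCon ι₁ ι₂).lift (Monoid.Coprod.lift (end1 P₁ P₂) (end2 P₁ P₂)) (by
    refine Con.conGen_le.2 ?_
    rintro x y ⟨k, rfl, rfl⟩
    show Monoid.Coprod.lift (end1 P₁ P₂) (end2 P₁ P₂) (Monoid.Coprod.inl (ι₁ k)) =
      Monoid.Coprod.lift (end1 P₁ P₂) (end2 P₁ P₂) (Monoid.Coprod.inr (ι₂ k))
    rw [Monoid.Coprod.lift_apply_inl, Monoid.Coprod.lift_apply_inr]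
    funext s
    exact Subtype.ext (act_compat P₁ P₂ k s.1.1 s.1.2))

private theorem bigHom_inl (P₁ : Pkg ι₁ T₁) (P₂ : Pkg ι₂ T₂) (m : M₁) :
    bigHom P₁ P₂ (amalgamInl ι₁ ι₂ m) = end1 P₁ P₂ m := by
  show (amalgamCon ι₁ ι₂).lift _ _ ((amalgamCon ι₁ ι₂).mk' (Monoid.Coprod.inl m)) = _
  exact Monoid.Coprod.lift_apply_inl (end1 P₁ P₂) (end2 P₁ P₂) m

private theorem bigHom_inr (P₁ : Pkg ι₁ T₁) (P₂ : Pkg ι₂ T₂) (m : M₂) :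
    bigHom P₁ P₂ (amalgamInr ι₁ ι₂ m) = end2 P₁ P₂ m := by
  show (amalgamCon ι₁ ι₂).lift _ _ ((amalgamCon ι₁ ι₂).mk' (Monoid.Coprod.inr m)) = _
  exact Monoid.Coprod.lift_apply_inr (end1 P₁ P₂) (end2 P₁ P₂) m

private theorem bigHom_emb_mul (P₁ : Pkg ι₁ T₁) (P₂ : Pkg ι₂ T₂) (g : Amalgam ι₁ ι₂) :
    ∀ s : {p : List (M₁ ⊕ M₂) × N // Nor T₁ T₂ p},
      emb ι₁ ι₂ ((bigHom P₁ P₂ g) s).1 = g * emb ι₁ ι₂ s.1 := by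
  induction g using Con.induction_on with
  | H x =>
    induction x using Monoid.Coprod.induction_on with
    | inl m =>
      intro s
      have h1 : ((Monoid.Coprod.inl m : Monoid.Coprod M₁ M₂) :
          (amalgamCon ι₁ ι₂).Quotient) = amalgamInl ι₁ ι₂ m := rfl
      rw [h1, bigHom_inl]
      exact (emb_act P₁ P₂ s.1.1 s.1.2).1 m
    | inr m =>
      intro s
      have h1 : ((Monoid.Coprod.inr m : Monoid.Coprod M₁ M₂) :
          (amalgamCon ι₁ ι₂).Quotient) = amalgamInr ι₁ ι₂ m := rfl
      rw [h1, bigHom_inr]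
      exact (emb_act P₁ P₂ s.1.1 s.1.2).2 m
    | mul x y ihx ihy =>
      intro s
      have h1 : ((x * y : Monoid.Coprod M₁ M₂) : (amalgamCon ι₁ ι₂).Quotient) =
        (x : (amalgamCon ι₁ ι₂).Quotient) * (y : (amalgamCon ι₁ ι₂).Quotient) := rfl
      rw [h1]; erw [map_mul (bigHom P₁ P₂)]
      have h2 : (bigHom P₁ P₂ (x : (amalgamCon ι₁ ι₂).Quotient) *
          bigHom P₁ P₂ (y : (amalgamCon ι₁ ι₂).Quotient)) s =
          bigHom P₁ P₂ (x : (amalgamCon ι₁ ι₂).Quotient)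
            (bigHom P₁ P₂ (y : (amalgamCon ι₁ ι₂).Quotient) s) := rfl
      rw [h2, ihx, ihy]
      exact (mul_assoc _ _ _).symm

private theorem bigHom_emb_fix (P₁ : Pkg ι₁ T₁) (P₂ : Pkg ι₂ T₂) :
    ∀ (r : List (M₁ ⊕ M₂)) (h : N) (hn : Nor T₁ T₂ (r, h)),
      ((bigHom P₁ P₂ (emb ι₁ ι₂ (r, h)))
        ⟨(([] : List (M₁ ⊕ M₂)), (1 : N)), nor_nil 1⟩).1 = (r, h) := by
  intro r
  induction r with
  | nil =>
    intro h hn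
    rw [emb_nil, bigHom_inl]
    show ACT (.inl (ι₁ h)) ([], 1) = ([], h)
    rw [rawAct_nil₁, map_one, mul_one, P₁.dcp_range, pre1_one]
  | cons x r IHr =>
    intro h hn
    rcases x with u | u
    · rw [emb_cons]
      simp only [Sum.elim_inl]
      rw [map_mul]
      have h2 : ∀ (F G : Function.End {p : List (M₁ ⊕ M₂) × N // Nor T₁ T₂ p}) s,
          (F * G) s = F (G s) := fun _ _ _ => rfl
      rw [h2, bigHom_inl]
      have IH := IHr h (nor_tail hn)
      show ACT (.inl u) ((bigHom P₁ P₂ (emb ι₁ ι₂ (r, h)))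
        ⟨(([] : List (M₁ ⊕ M₂)), (1 : N)), nor_nil 1⟩).1 = _
      rw [IH]
      exact act_rep₁ P₁ P₂ (nor_head₁ hn).1 (nor_head₁ hn).2 r h (nor_tail hn) (nor_headR hn)
    · rw [emb_cons]
      simp only [Sum.elim_inr]
      rw [map_mul]
      have h2 : ∀ (F G : Function.End {p : List (M₁ ⊕ M₂) × N // Nor T₁ T₂ p}) s,
          (F * G) s = F (G s) := fun _ _ _ => rfl
      rw [h2, bigHom_inr]
      have IH := IHr h (nor_tail hn)
      show ACT (.inr u) ((bigHom P₁ P₂ (emb ι₁ ι₂ (r, h)))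
        ⟨(([] : List (M₁ ⊕ M₂)), (1 : N)), nor_nil 1⟩).1 = _
      rw [IH]
      exact act_rep₂ P₁ P₂ (nor_head₂ hn).1 (nor_head₂ hn).2 r h (nor_tail hn) (nor_headL hn)

end AmalgamFinal

/-- **Proposition 3.3.** In a special amalgam `M₁ *_N M₂` with `M₁, M₂` cancellative and
`N` having the confluence property in both, given transversals `T₁, T₂` (containing `1`)
of the minimal `R_N`-classes, every element has a unique amalgam decomposition
`g = g₁ ⋯ g_m h` with `h ∈ N`, each `g_i` in `T₁ \ {1}` or `T₂ \ {1}`, and no two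
consecutive `g_i` from the same transversal. -/
theorem proposition_3_3 {M₁ M₂ N : Type*} [Monoid M₁] [Monoid M₂] [Monoid N]
    (ι₁ : N →* M₁) (ι₂ : N →* M₂)
    (hι₁ : Function.Injective ι₁) (hι₂ : Function.Injective ι₂)
    (hs₁ : IsSpecial (MonoidHom.mrange ι₁)) (hs₂ : IsSpecial (MonoidHom.mrange ι₂))
    (hc₁ : IsCancellative M₁) (hc₂ : IsCancellative M₂)
    (hconf₁ : Confluence (MonoidHom.mrange ι₁)) (hconf₂ : Confluence (MonoidHom.mrange ι₂))
    (T₁ : Set M₁) (T₂ : Set M₂)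
    (hT₁ : (1 : M₁) ∈ T₁ ∧
      (∀ t ∈ T₁, IsMinimalRCoset (MonoidHom.mrange ι₁) (RCoset (MonoidHom.mrange ι₁) t)) ∧
      ∀ C : Set M₁, IsMinimalRCoset (MonoidHom.mrange ι₁) C →
        ∃! t : M₁, t ∈ T₁ ∧ RCoset (MonoidHom.mrange ι₁) t = C)
    (hT₂ : (1 : M₂) ∈ T₂ ∧
      (∀ t ∈ T₂, IsMinimalRCoset (MonoidHom.mrange ι₂) (RCoset (MonoidHom.mrange ι₂) t)) ∧
      ∀ C : Set M₂, IsMinimalRCoset (MonoidHom.mrange ι₂) C →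
        ∃! t : M₂, t ∈ T₂ ∧ RCoset (MonoidHom.mrange ι₂) t = C) :
    ∀ g : Amalgam ι₁ ι₂, ∃! p : List (M₁ ⊕ M₂) × N,
      (∀ x ∈ p.1, Sum.elim (fun a : M₁ => a ∈ T₁ ∧ a ≠ 1) (fun b : M₂ => b ∈ T₂ ∧ b ≠ 1) x) ∧
      List.Chain' (fun x y : M₁ ⊕ M₂ => x.isLeft ≠ y.isLeft) p.1 ∧
      g = (p.1.map (Sum.elim (amalgamInl ι₁ ι₂) (amalgamInr ι₁ ι₂))).prod *
            amalgamInl ι₁ ι₂ (ι₁ p.2) := by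
  have P₁ : Pkg ι₁ T₁ := ⟨hι₁, hs₁, hc₁, hconf₁.1, hT₁.1, hT₁.2.1, hT₁.2.2⟩
  have P₂ : Pkg ι₂ T₂ := ⟨hι₂, hs₂, hc₂, hconf₂.1, hT₂.1, hT₂.2.1, hT₂.2.2⟩
  intro g
  have e₀ : {p : List (M₁ ⊕ M₂) × N // Nor T₁ T₂ p} :=
    ⟨(([] : List (M₁ ⊕ M₂)), (1 : N)), nor_nil 1⟩
  refine ⟨((bigHom P₁ P₂ g) ⟨(([] : List (M₁ ⊕ M₂)), (1 : N)), nor_nil 1⟩).1,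
    ⟨((bigHom P₁ P₂ g) ⟨(([] : List (M₁ ⊕ M₂)), (1 : N)), nor_nil 1⟩).2.1,
     ((bigHom P₁ P₂ g) ⟨(([] : List (M₁ ⊕ M₂)), (1 : N)), nor_nil 1⟩).2.2, ?_⟩, ?_⟩
  · have h1 := bigHom_emb_mul P₁ P₂ g ⟨(([] : List (M₁ ⊕ M₂)), (1 : N)), nor_nil 1⟩
    have h2 : emb ι₁ ι₂ (([] : List (M₁ ⊕ M₂)), (1 : N)) = 1 := by
      rw [emb_nil, map_one, map_one]
    rw [h2, mul_one] at h1
    exact h1.symm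
  · rintro q ⟨hq1, hq2, hq3⟩
    have hnq : Nor T₁ T₂ q := ⟨hq1, hq2⟩
    have h3 : ((bigHom P₁ P₂ (emb ι₁ ι₂ (q.1, q.2)))
        ⟨(([] : List (M₁ ⊕ M₂)), (1 : N)), nor_nil 1⟩).1 = (q.1, q.2) :=
      bigHom_emb_fix P₁ P₂ q.1 q.2 hnq
    rw [Prod.mk.eta] at h3
    have h4 : g = emb ι₁ ι₂ q := hq3
    rw [h4]
    exact h3.symm

end PG
end

section
/- Let M1 *_N M2 be a special amalgam such that M1 and M2 are cancellative and N has the confluence property in both M1 and M2. Then the monoid M1 *_N M2 is cancellative. -/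
namespace PG

variable {M : Type*} [Monoid M]

section Aux


section Rewriting

variable {α : Type*} {R : α → α → Prop}

open Relation

theorem wf_of_no_chain (h : ¬ ∃ f : ℕ → α, ∀ n, R (f n) (f (n + 1))) :
    WellFounded (Function.swap R) := by
  constructor
  intro x
  by_contra hx
  have step : ∀ a : {a : α // ¬ Acc (Function.swap R) a},
      ∃ b : {a : α // ¬ Acc (Function.swap R) a}, R a.1 b.1 := by
    rintro ⟨a, ha⟩
    by_contra hb
    push_neg at hb
    exact ha (Acc.intro a fun y hy => by_contra fun hy' => hb ⟨y, hy'⟩ hy)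
  choose next hnext using step
  let f : ℕ → {a : α // ¬ Acc (Function.swap R) a} := fun n => Nat.rec ⟨x, hx⟩ (fun _ p => next p) n
  exact h ⟨fun n => (f n).1, fun n => hnext (f n)⟩

/-- Newman's lemma. -/
theorem newman (wf : WellFounded (Function.swap R))
    (lc : ∀ c a b, R c a → R c b → ∃ d, ReflTransGen R a d ∧ ReflTransGen R b d) :
    ∀ c a b, ReflTransGen R c a → ReflTransGen R c b →
      ∃ d, ReflTransGen R a d ∧ ReflTransGen R b d := by
  intro c
  induction c using wf.induction with
  | _ c ih =>
    intro a b hca hcb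
    rcases hca.cases_head with rfl | ⟨a₁, hc1, h1a⟩
    · exact ⟨b, hcb, ReflTransGen.refl⟩
    rcases hcb.cases_head with rfl | ⟨b₁, hc2, h2b⟩
    · exact ⟨a, ReflTransGen.refl, hca⟩
    -- local confluence on the two one-steps
    obtain ⟨d, h1d, h2d⟩ := lc c a₁ b₁ hc1 hc2
    -- join a and d via induction at a₁
    obtain ⟨e, hae, hde⟩ := ih a₁ hc1 a d h1a h1d
    -- join d→e and b via induction at b₁ : b₁ →* d →* e and b₁ →* b
    obtain ⟨f, hef, hbf⟩ := ih b₁ hc2 e b (h2d.trans hde) h2b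
    exact ⟨f, hae.trans hef, hbf⟩

def RTerm (R : α → α → Prop) (a : α) : Prop := ∀ b, ¬ R a b

theorem rterm_eq_of_reflTransGen {a b : α} (h : Relation.ReflTransGen R a b) (ha : RTerm R a) :
    a = b := by
  rcases h.cases_head with rfl | ⟨c, hac, _⟩
  · rfl
  · exact absurd hac (ha c)

theorem exists_rterm (wf : WellFounded (Function.swap R)) (a : α) :
    ∃ b, ReflTransGen R a b ∧ RTerm R b := by
  induction a using wf.induction with
  | _ a ih =>
    by_cases ha : RTerm R a
    · exact ⟨a, ReflTransGen.refl, ha⟩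
    · simp only [RTerm, not_forall, not_not] at ha
      obtain ⟨b, hab⟩ := ha
      obtain ⟨c, hbc, hc⟩ := ih b hab
      exact ⟨c, ReflTransGen.head hab hbc, hc⟩

theorem rterm_unique (wf : WellFounded (Function.swap R))
    (lc : ∀ c a b, R c a → R c b → ∃ d, ReflTransGen R a d ∧ ReflTransGen R b d)
    {c a b : α} (hca : ReflTransGen R c a) (hcb : ReflTransGen R c b)
    (ha : RTerm R a) (hb : RTerm R b) : a = b := by
  obtain ⟨d, had, hbd⟩ := newman wf lc c a b hca hcb
  rw [rterm_eq_of_reflTransGen had ha, rterm_eq_of_reflTransGen hbd hb]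

end Rewriting


/-- Decomposition data for a special submonoid: every element factors uniquely as an
`N`-part times a good element. -/
structure DecompData {M N : Type*} [Monoid M] [Monoid N] (ι : N →* M) where
  dN : M → N
  dC : M → M
  Good : M → Prop
  eq_dec : ∀ g, g = ι (dN g) * dC g
  good_dC : ∀ g, Good (dC g)
  good_one : Good 1
  dC_mul : ∀ (n : N) (c : M), Good c → dC (ι n * c) = c
  dN_mul : ∀ (n : N) (c : M), Good c → dN (ι n * c) = n
  good_mem : ∀ c, Good c → c ∈ MonoidHom.mrange ι → c = 1

namespace DecompData

variable {M N : Type*} [Monoid M] [Monoid N] {ι : N →* M} (d : DecompData ι)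

theorem dC_iota (n : N) : d.dC (ι n) = 1 := by
  have := d.dC_mul n 1 d.good_one; rwa [mul_one] at this

theorem dN_iota (n : N) : d.dN (ι n) = n := by
  have := d.dN_mul n 1 d.good_one; rwa [mul_one] at this

theorem uniq {n n' : N} {c c' : M} (hc : d.Good c) (hc' : d.Good c')
    (h : ι n * c = ι n' * c') : n = n' ∧ c = c' := by
  constructor
  · rw [← d.dN_mul n c hc, h, d.dN_mul n' c' hc']
  · rw [← d.dC_mul n c hc, h, d.dC_mul n' c' hc']

theorem dC_eq_one_iff (g : M) : d.dC g = 1 ↔ g ∈ MonoidHom.mrange ι := by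
  constructor
  · intro h
    refine ⟨d.dN g, ?_⟩
    conv_rhs => rw [d.eq_dec g, h, mul_one]
  · rintro ⟨n, rfl⟩
    exact d.dC_iota n

end DecompData

section Exists

variable {M N : Type*} [Monoid M] [Monoid N] (ι : N →* M)

theorem exists_decompData (hι : Function.Injective ι)
    (hs : IsSpecial (MonoidHom.mrange ι)) (hc : IsCancellative M)
    (hconf : LConfluence (MonoidHom.mrange ι)) : Nonempty (DecompData ι) := by
  classical
  set P := MonoidHom.mrange ι with hP
  set R := LReduces P with hR
  have wf : WellFounded (Function.swap R) := wf_of_no_chain hconf.1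
  -- basic coset facts
  have mem_self : ∀ g : M, g ∈ LCoset P g := fun g => ⟨1, one_mem P, (one_mul g).symm⟩
  have coset_sub : ∀ {a b : M}, a ∈ LCoset P b → LCoset P a ⊆ LCoset P b := by
    rintro a b ⟨h, hh, rfl⟩ x ⟨k, hk, rfl⟩
    exact ⟨k * h, mul_mem hk hh, (mul_assoc _ _ _).symm⟩
  have coset_eq : ∀ {a b : M}, a ∈ LCoset P b → b ∈ LCoset P a → LCoset P a = LCoset P b :=
    fun ha hb => le_antisymm (coset_sub ha) (coset_sub hb)
  -- one step or equal
  have step : ∀ (p : M) (_ : p ∈ P) (g : M),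
      LCoset P (p * g) = LCoset P g ∨ R (LCoset P (p * g)) (LCoset P g) := by
    intro p hp g
    by_cases hg : g ∈ LCoset P (p * g)
    · exact Or.inl (coset_eq ⟨p, hp, rfl⟩ hg)
    · exact Or.inr ⟨g, p * g, rfl, rfl, ⟨p, hp, rfl⟩, hg⟩
  -- reachability preserves membership and cosethood
  have sub_of_rtg : ∀ {B A : Set M}, Relation.ReflTransGen R B A → B ⊆ A := by
    intro B A h
    induction h with
    | refl => exact le_rfl
    | tail _ h ih =>
      refine le_trans ih ?_
      obtain ⟨g₁, g₂, rfl, rfl, hg₂, _⟩ := h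
      exact coset_sub hg₂
  have coset_of_rtg : ∀ {g : M} {A : Set M}, Relation.ReflTransGen R (LCoset P g) A →
      ∃ a, A = LCoset P a := by
    intro g A h
    induction h with
    | refl => exact ⟨g, rfl⟩
    | tail _ h _ => obtain ⟨g₁, g₂, rfl, _, _, _⟩ := h; exact ⟨g₁, rfl⟩
  -- normal form
  have nf_ex : ∀ g : M, ∃ C, Relation.ReflTransGen R (LCoset P g) C ∧ RTerm R C :=
    fun g => exists_rterm wf _
  choose nf nf_rtg nf_term using fun g => nf_ex g
  have nf_unique : ∀ (g : M) (C : Set M), Relation.ReflTransGen R (LCoset P g) C → RTerm R C →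
      C = nf g := fun g C h hC => rterm_unique wf hconf.2 h (nf_rtg g) hC (nf_term g)
  -- F4L : nf (p * g) = nf g for p ∈ P
  have nf_mul : ∀ (p : M) (_ : p ∈ P) (g : M), nf (p * g) = nf g := by
    intro p hp g
    rcases step p hp g with h | h
    · exact (nf_unique (p * g) (nf g) (h ▸ nf_rtg g) (nf_term g)).symm
    · exact (nf_unique (p * g) (nf g) (Relation.ReflTransGen.head h (nf_rtg g)) (nf_term g)).symm
  -- nf of a good element ; terminality of the unit coset
  have nf_coset : ∀ g, ∃ a, nf g = LCoset P a := fun g => coset_of_rtg (nf_rtg g)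
  have mem_nf : ∀ g, g ∈ nf g := fun g => sub_of_rtg (nf_rtg g) (mem_self g)
  have one_term : RTerm R (LCoset P 1) := by
    rintro A ⟨g₁, g₂, rfl, hB, hg₂, hg₁⟩
    -- LCoset P 1 = LCoset P g₂ ∋ 1 ; g₂ ∈ LCoset P g₁
    have h1 : (1 : M) ∈ LCoset P g₂ := by rw [← hB]; exact mem_self 1
    obtain ⟨h, hh, h1⟩ := h1
    obtain ⟨k, hk, rfl⟩ := hg₂
    have : (h * k) * g₁ ∈ P := by
      rw [mul_assoc]; rw [← h1]; exact one_mem P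
    have hg₁P : g₁ ∈ P := (hs _ _ this).2
    apply hg₁
    rw [← hB]
    exact ⟨g₁, hg₁P, (mul_one g₁).symm⟩
  have nf_one : nf 1 = LCoset P 1 := (nf_unique 1 _ Relation.ReflTransGen.refl one_term).symm
  -- representatives
  set lrep : Set M → M := fun C =>
    if C = LCoset P 1 then 1 else (if h2 : ∃ a, C = LCoset P a then Classical.choose h2 else 1)
    with hlrep
  have lrep_coset : ∀ C, (∃ a, C = LCoset P a) → LCoset P (lrep C) = C := by
    intro C hC
    show LCoset P (if C = LCoset P 1 then 1 else _) = C
    by_cases h : C = LCoset P 1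
    · rw [if_pos h]; exact h.symm
    · rw [if_neg h, dif_pos hC]
      exact (Classical.choose_spec hC).symm
  have lrep_one : lrep (LCoset P 1) = 1 := by
    show (if LCoset P 1 = LCoset P 1 then 1 else _) = 1
    rw [if_pos rfl]
  set dC : M → M := fun g => lrep (nf g) with hdC
  have mem_dC : ∀ g, g ∈ LCoset P (dC g) := by
    intro g
    show g ∈ LCoset P (lrep (nf g))
    rw [lrep_coset (nf g) (nf_coset g)]
    exact mem_nf g
  have dN_ex : ∀ g, ∃ n : N, g = ι n * dC g := by
    intro g
    obtain ⟨p, hp, hg⟩ := mem_dC g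
    obtain ⟨n, rfl⟩ := hp
    exact ⟨n, hg⟩
  choose dN dN_spec using dN_ex
  set Good : M → Prop := fun c => RTerm R (LCoset P c) ∧ lrep (LCoset P c) = c with hGood
  have nf_good : ∀ c, Good c → nf c = LCoset P c :=
    fun c hc => (nf_unique c _ Relation.ReflTransGen.refl hc.1).symm
  have dC_good : ∀ c, Good c → dC c = c := by
    intro c hc
    show lrep (nf c) = c
    rw [nf_good c hc]; exact hc.2
  have dC_mul : ∀ (n : N) (c : M), Good c → dC (ι n * c) = c := by
    intro n c hc
    show lrep (nf (ι n * c)) = c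
    rw [nf_mul (ι n) ⟨n, rfl⟩ c, nf_good c hc]
    exact hc.2
  refine ⟨⟨dN, dC, Good, dN_spec, ?_, ?_, dC_mul, ?_, ?_⟩⟩
  · -- good_dC
    intro g
    have h1 : LCoset P (dC g) = nf g := lrep_coset (nf g) (nf_coset g)
    constructor
    · rw [h1]; exact nf_term g
    · rw [h1]
  · -- good_one
    exact ⟨one_term, lrep_one⟩
  · -- dN_mul
    intro n c hgc
    have h1 := dN_spec (ι n * c)
    rw [dC_mul n c hgc] at h1
    have h2 : ι (dN (ι n * c)) = ι n := by
      have := hc (ι (dN (ι n * c))) (ι n) 1 c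
      apply this
      rw [one_mul, one_mul, ← h1]
    exact hι h2
  · -- good_mem
    intro c hgc hmem
    obtain ⟨n, rfl⟩ := hmem
    have h1 : dC (ι n) = 1 := by
      have := dC_mul n 1 ⟨one_term, lrep_one⟩
      rwa [mul_one] at this
    rw [← dC_good (ι n) hgc, h1]

end Exists

end Aux

section Action

variable {M₁ M₂ N : Type*} [Monoid M₁] [Monoid M₂] [Monoid N]
variable {ι₁ : N →* M₁} {ι₂ : N →* M₂}

/-- Goodness of a syllable. -/
def SylGood (d₁ : DecompData ι₁) (d₂ : DecompData ι₂) : M₁ ⊕ M₂ → Prop :=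
  Sum.elim (fun c => d₁.Good c ∧ c ≠ 1) (fun c => d₂.Good c ∧ c ≠ 1)

/-- Goodness of a word: alternating sides, all syllables good. -/
def WordGood (d₁ : DecompData ι₁) (d₂ : DecompData ι₂) (w : N × List (M₁ ⊕ M₂)) : Prop :=
  List.Chain' (fun a b => a.isLeft ≠ b.isLeft) w.2 ∧ ∀ s ∈ w.2, SylGood d₁ d₂ s

variable (d₁ : DecompData ι₁) (d₂ : DecompData ι₂)

open Classical in
/-- Prepend an element of `M₁` to a word not starting with an `M₁`-syllable. -/
noncomputable def ext1 (y : M₁) (l : List (M₁ ⊕ M₂)) : N × List (M₁ ⊕ M₂) :=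
  if d₁.dC y = 1 then (d₁.dN y, l) else (d₁.dN y, Sum.inl (d₁.dC y) :: l)

theorem ext1_pos {y : M₁} (h : d₁.dC y = 1) (l : List (M₁ ⊕ M₂)) :
    ext1 d₁ y l = (d₁.dN y, l) := by rw [ext1]; exact if_pos h

theorem ext1_neg {y : M₁} (h : ¬ d₁.dC y = 1) (l : List (M₁ ⊕ M₂)) :
    ext1 d₁ y l = (d₁.dN y, Sum.inl (d₁.dC y) :: l) := by rw [ext1]; exact if_neg h

/-- The raw left action of `M₁` on words. -/
noncomputable def rawAct1 (g : M₁) : N × List (M₁ ⊕ M₂) → N × List (M₁ ⊕ M₂)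
  | (n, Sum.inl c :: t) => (d₁.dN (g * ι₁ n * c), Sum.inl (d₁.dC (g * ι₁ n * c)) :: t)
  | (n, Sum.inr c :: t) => ext1 d₁ (g * ι₁ n) (Sum.inr c :: t)
  | (n, []) => ext1 d₁ (g * ι₁ n) []

@[simp] theorem rawAct1_inl (g : M₁) (n : N) (c : M₁) (t : List (M₁ ⊕ M₂)) :
    rawAct1 d₁ g (n, Sum.inl c :: t) =
      (d₁.dN (g * ι₁ n * c), Sum.inl (d₁.dC (g * ι₁ n * c)) :: t) := rfl

@[simp] theorem rawAct1_inr (g : M₁) (n : N) (c : M₂) (t : List (M₁ ⊕ M₂)) :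
    rawAct1 d₁ g (n, Sum.inr c :: t) = ext1 d₁ (g * ι₁ n) (Sum.inr c :: t) := rfl

@[simp] theorem rawAct1_nil (g : M₁) (n : N) :
    rawAct1 d₁ g (n, ([] : List (M₁ ⊕ M₂))) = ext1 d₁ (g * ι₁ n) [] := rfl

open Classical in
noncomputable def ext2 (y : M₂) (l : List (M₁ ⊕ M₂)) : N × List (M₁ ⊕ M₂) :=
  if d₂.dC y = 1 then (d₂.dN y, l) else (d₂.dN y, Sum.inr (d₂.dC y) :: l)

theorem ext2_pos {y : M₂} (h : d₂.dC y = 1) (l : List (M₁ ⊕ M₂)) :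
    ext2 d₂ y l = (d₂.dN y, l) := by rw [ext2]; exact if_pos h

theorem ext2_neg {y : M₂} (h : ¬ d₂.dC y = 1) (l : List (M₁ ⊕ M₂)) :
    ext2 d₂ y l = (d₂.dN y, Sum.inr (d₂.dC y) :: l) := by rw [ext2]; exact if_neg h

/-- The raw left action of `M₂` on words. -/
noncomputable def rawAct2 (g : M₂) : N × List (M₁ ⊕ M₂) → N × List (M₁ ⊕ M₂)
  | (n, Sum.inr c :: t) => (d₂.dN (g * ι₂ n * c), Sum.inr (d₂.dC (g * ι₂ n * c)) :: t)
  | (n, Sum.inl c :: t) => ext2 d₂ (g * ι₂ n) (Sum.inl c :: t)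
  | (n, []) => ext2 d₂ (g * ι₂ n) []

@[simp] theorem rawAct2_inr (g : M₂) (n : N) (c : M₂) (t : List (M₁ ⊕ M₂)) :
    rawAct2 d₂ g (n, Sum.inr c :: t) =
      (d₂.dN (g * ι₂ n * c), Sum.inr (d₂.dC (g * ι₂ n * c)) :: t) := rfl

@[simp] theorem rawAct2_inl (g : M₂) (n : N) (c : M₁) (t : List (M₁ ⊕ M₂)) :
    rawAct2 d₂ g (n, Sum.inl c :: t) = ext2 d₂ (g * ι₂ n) (Sum.inl c :: t) := rfl

@[simp] theorem rawAct2_nil (g : M₂) (n : N) :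
    rawAct2 d₂ g (n, ([] : List (M₁ ⊕ M₂))) = ext2 d₂ (g * ι₂ n) [] := rfl

theorem wg_head_inl {n : N} {c : M₁} {t : List (M₁ ⊕ M₂)}
    (hw : WordGood d₁ d₂ (n, Sum.inl c :: t)) : d₁.Good c ∧ c ≠ 1 :=
  hw.2 (Sum.inl c) List.mem_cons_self

theorem wg_head_inr {n : N} {c : M₂} {t : List (M₁ ⊕ M₂)}
    (hw : WordGood d₁ d₂ (n, Sum.inr c :: t)) : d₂.Good c ∧ c ≠ 1 :=
  hw.2 (Sum.inr c) List.mem_cons_self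


section Lemmas1

/-- The merged head syllable is not trivial. -/
theorem dC_merge_ne_one (hs₁ : IsSpecial (MonoidHom.mrange ι₁)) {x : M₁} {c : M₁} (hgc : d₁.Good c) (hc1 : c ≠ 1) :
    d₁.dC (x * c) ≠ 1 := by
  intro h
  have hm : x * c ∈ MonoidHom.mrange ι₁ := (d₁.dC_eq_one_iff _).1 h
  exact hc1 (d₁.good_mem c hgc (hs₁ x c hm).2)

theorem good_rawAct1 (hs₁ : IsSpecial (MonoidHom.mrange ι₁)) (g : M₁) {w : N × List (M₁ ⊕ M₂)} (hw : WordGood d₁ d₂ w) :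
    WordGood d₁ d₂ (rawAct1 d₁ g w) := by
  obtain ⟨n, l⟩ := w
  match l with
  | [] =>
    rw [rawAct1_nil]
    by_cases h : d₁.dC (g * ι₁ n) = 1
    · rw [ext1_pos d₁ h]
      exact ⟨List.isChain_nil, by simp⟩
    · rw [ext1_neg d₁ h]
      refine ⟨List.isChain_singleton _, ?_⟩
      intro s hs
      rcases List.mem_singleton.1 hs with rfl
      exact ⟨d₁.good_dC _, h⟩
  | Sum.inl c :: t =>
    obtain ⟨hgc, hc1⟩ := wg_head_inl d₁ d₂ hw
    rw [rawAct1_inl]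
    obtain ⟨hch, hsyl⟩ := hw
    constructor
    · unfold List.Chain' at hch ⊢; rw [List.isChain_cons] at hch ⊢
      exact ⟨hch.1, hch.2⟩
    · intro s hs
      rcases List.mem_cons.1 hs with rfl | hs
      · exact ⟨d₁.good_dC _, dC_merge_ne_one d₁ hs₁ hgc hc1⟩
      · exact hsyl s (List.mem_cons_of_mem _ hs)
  | Sum.inr c :: t =>
    rw [rawAct1_inr]
    by_cases h : d₁.dC (g * ι₁ n) = 1
    · rw [ext1_pos d₁ h]; exact hw
    · rw [ext1_neg d₁ h]
      obtain ⟨hch, hsyl⟩ := hw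
      constructor
      · unfold List.Chain'; rw [List.isChain_cons]
        refine ⟨?_, hch⟩
        intro y hy
        simp only [List.head?_cons, Option.mem_def, Option.some.injEq] at hy
        subst hy
        simp
      · intro s hs
        rcases List.mem_cons.1 hs with rfl | hs
        · exact ⟨d₁.good_dC _, h⟩
        · exact hsyl s hs

theorem rawAct1_one {w : N × List (M₁ ⊕ M₂)} (hw : WordGood d₁ d₂ w) :
    rawAct1 d₁ 1 w = w := by
  obtain ⟨n, l⟩ := w
  match l with
  | [] =>
    rw [rawAct1_nil, one_mul, ext1_pos d₁ (d₁.dC_iota n), d₁.dN_iota n]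
  | Sum.inl c :: t =>
    obtain ⟨hgc, _⟩ := wg_head_inl d₁ d₂ hw
    rw [rawAct1_inl, one_mul, d₁.dC_mul n c hgc, d₁.dN_mul n c hgc]
  | Sum.inr c :: t =>
    rw [rawAct1_inr, one_mul, ext1_pos d₁ (d₁.dC_iota n), d₁.dN_iota n]

theorem rawAct1_iota (ν : N) {w : N × List (M₁ ⊕ M₂)} (hw : WordGood d₁ d₂ w) :
    rawAct1 d₁ (ι₁ ν) w = (ν * w.1, w.2) := by
  obtain ⟨n, l⟩ := w
  match l with
  | [] =>
    rw [rawAct1_nil, ← map_mul, ext1_pos d₁ (d₁.dC_iota _), d₁.dN_iota]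
  | Sum.inl c :: t =>
    obtain ⟨hgc, _⟩ := wg_head_inl d₁ d₂ hw
    rw [rawAct1_inl, ← map_mul, d₁.dC_mul _ c hgc, d₁.dN_mul _ c hgc]
  | Sum.inr c :: t =>
    rw [rawAct1_inr, ← map_mul, ext1_pos d₁ (d₁.dC_iota _), d₁.dN_iota]

theorem rawAct1_mul (hs₁ : IsSpecial (MonoidHom.mrange ι₁)) (g g' : M₁) {w : N × List (M₁ ⊕ M₂)} (hw : WordGood d₁ d₂ w) :
    rawAct1 d₁ (g * g') w = rawAct1 d₁ g (rawAct1 d₁ g' w) := by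
  obtain ⟨n, l⟩ := w
  match l with
  | Sum.inl c :: t =>
    obtain ⟨hgc, hc1⟩ := wg_head_inl d₁ d₂ hw
    rw [rawAct1_inl, rawAct1_inl, rawAct1_inl]
    have hz : g * ι₁ (d₁.dN (g' * ι₁ n * c)) * d₁.dC (g' * ι₁ n * c) = g * g' * ι₁ n * c := by
      rw [mul_assoc g, ← d₁.eq_dec (g' * ι₁ n * c)]
      simp only [mul_assoc]
    rw [hz]
  | Sum.inr c :: t =>
    rw [rawAct1_inr, rawAct1_inr]
    by_cases h : d₁.dC (g' * ι₁ n) = 1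
    · rw [ext1_pos d₁ h, rawAct1_inr]
      have hy : g * ι₁ (d₁.dN (g' * ι₁ n)) = g * g' * ι₁ n := by
        conv_rhs => rw [mul_assoc, d₁.eq_dec (g' * ι₁ n), h, mul_one]
      rw [hy]
    · rw [ext1_neg d₁ h, rawAct1_inl]
      have hy : g * ι₁ (d₁.dN (g' * ι₁ n)) * d₁.dC (g' * ι₁ n) = g * g' * ι₁ n := by
        rw [mul_assoc g, ← d₁.eq_dec (g' * ι₁ n), ← mul_assoc]
      rw [hy]
      have h2 : ¬ d₁.dC (g * g' * ι₁ n) = 1 := by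
        intro h2
        have hm : g * (g' * ι₁ n) ∈ MonoidHom.mrange ι₁ := by
          rw [← mul_assoc]; exact (d₁.dC_eq_one_iff _).1 h2
        exact h ((d₁.dC_eq_one_iff _).2 (hs₁ g (g' * ι₁ n) hm).2)
      rw [ext1_neg d₁ h2]
  | [] =>
    rw [rawAct1_nil, rawAct1_nil]
    by_cases h : d₁.dC (g' * ι₁ n) = 1
    · rw [ext1_pos d₁ h, rawAct1_nil]
      have hy : g * ι₁ (d₁.dN (g' * ι₁ n)) = g * g' * ι₁ n := by
        conv_rhs => rw [mul_assoc, d₁.eq_dec (g' * ι₁ n), h, mul_one]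
      rw [hy]
    · rw [ext1_neg d₁ h, rawAct1_inl]
      have hy : g * ι₁ (d₁.dN (g' * ι₁ n)) * d₁.dC (g' * ι₁ n) = g * g' * ι₁ n := by
        rw [mul_assoc g, ← d₁.eq_dec (g' * ι₁ n), ← mul_assoc]
      rw [hy]
      have h2 : ¬ d₁.dC (g * g' * ι₁ n) = 1 := by
        intro h2
        have hm : g * (g' * ι₁ n) ∈ MonoidHom.mrange ι₁ := by
          rw [← mul_assoc]; exact (d₁.dC_eq_one_iff _).1 h2
        exact h ((d₁.dC_eq_one_iff _).2 (hs₁ g (g' * ι₁ n) hm).2)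
      rw [ext1_neg d₁ h2]

theorem rawAct1_inj (hι₁ : Function.Injective ι₁) (hc₁ : IsCancellative M₁) (g : M₁) {w w' : N × List (M₁ ⊕ M₂)}
    (hw : WordGood d₁ d₂ w) (hw' : WordGood d₁ d₂ w')
    (h : rawAct1 d₁ g w = rawAct1 d₁ g w') : w = w' := by
  -- left cancellation in M₁
  have lcan : ∀ a b : M₁, g * a = g * b → a = b := by
    intro a b hab
    exact hc₁ a b g 1 (by rw [mul_one, mul_one]; exact hab)
  obtain ⟨n, l⟩ := w
  obtain ⟨n', l'⟩ := w'
  -- helper: ext1 vs ext1 when both lists do not start with inl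
  have extcase : ∀ (m m' : N) (t t' : List (M₁ ⊕ M₂)),
      (∀ c s, t ≠ Sum.inl c :: s) → (∀ c s, t' ≠ Sum.inl c :: s) →
      ext1 d₁ (g * ι₁ m) t = ext1 d₁ (g * ι₁ m') t' → m = m' ∧ t = t' := by
    intro m m' t t' ht ht' hx
    by_cases h1 : d₁.dC (g * ι₁ m) = 1 <;> by_cases h2 : d₁.dC (g * ι₁ m') = 1
    · rw [ext1_pos d₁ h1, ext1_pos d₁ h2] at hx
      rw [Prod.mk.injEq] at hx
      obtain ⟨hN, hL⟩ := hx
      have hy : g * ι₁ m = g * ι₁ m' := by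
        conv_lhs => rw [d₁.eq_dec (g * ι₁ m), h1, mul_one, hN]
        conv_rhs => rw [d₁.eq_dec (g * ι₁ m'), h2, mul_one]
      exact ⟨hι₁ (lcan _ _ hy), hL⟩
    · rw [ext1_pos d₁ h1, ext1_neg d₁ h2] at hx
      rw [Prod.mk.injEq] at hx
      obtain ⟨hN, hL⟩ := hx
      exact absurd hL (ht _ _)
    · rw [ext1_neg d₁ h1, ext1_pos d₁ h2] at hx
      rw [Prod.mk.injEq] at hx
      obtain ⟨hN, hL⟩ := hx
      exact absurd hL.symm (ht' _ _)
    · rw [ext1_neg d₁ h1, ext1_neg d₁ h2] at hx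
      rw [Prod.mk.injEq] at hx
      obtain ⟨hN, hL⟩ := hx
      injection hL with hC hT
      injection hC with hc
      have hy : g * ι₁ m = g * ι₁ m' := by
        conv_lhs => rw [d₁.eq_dec (g * ι₁ m), hN, hc]
        conv_rhs => rw [d₁.eq_dec (g * ι₁ m')]
      exact ⟨hι₁ (lcan _ _ hy), hT⟩
  -- helper : inl-headed vs not
  have mixcase : ∀ (m m' : N) (c : M₁) (t t' : List (M₁ ⊕ M₂)),
      (∀ c s, t' ≠ Sum.inl c :: s) → d₁.Good c → c ≠ 1 →
      (d₁.dN (g * ι₁ m * c), Sum.inl (d₁.dC (g * ι₁ m * c)) :: t) ≠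
        ext1 d₁ (g * ι₁ m') t' := by
    intro m m' c t t' ht' hgc hc1 hx
    by_cases h2 : d₁.dC (g * ι₁ m') = 1
    · rw [ext1_pos d₁ h2] at hx
      rw [Prod.mk.injEq] at hx
      obtain ⟨hN, hL⟩ := hx
      exact ht' _ _ hL.symm
    · rw [ext1_neg d₁ h2] at hx
      rw [Prod.mk.injEq] at hx
      obtain ⟨hN, hL⟩ := hx
      injection hL with hC hT
      injection hC with hc
      have hy : g * (ι₁ m * c) = g * (ι₁ m' * 1) := by
        rw [mul_one, ← mul_assoc]
        conv_lhs => rw [d₁.eq_dec (g * ι₁ m * c), hN, hc]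
        conv_rhs => rw [d₁.eq_dec (g * ι₁ m')]
      obtain ⟨_, hce⟩ := d₁.uniq hgc d₁.good_one (lcan _ _ hy)
      exact hc1 hce
  have notInl_nil : ∀ (c : M₁) s, ([] : List (M₁ ⊕ M₂)) ≠ Sum.inl c :: s := by
    intro c s hh; cases hh
  have notInl_inr : ∀ (c' : M₂) (t : List (M₁ ⊕ M₂)) (c : M₁) s,
      (Sum.inr c' :: t : List (M₁ ⊕ M₂)) ≠ Sum.inl c :: s := by
    intro c' t c s hh
    injection hh with h1 _
    cases h1
  match l, l' with
  | Sum.inl c :: t, Sum.inl c' :: t' =>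
    obtain ⟨hgc, hc1⟩ := wg_head_inl d₁ d₂ hw
    obtain ⟨hgc', hc1'⟩ := wg_head_inl d₁ d₂ hw'
    rw [rawAct1_inl, rawAct1_inl] at h
    rw [Prod.mk.injEq] at h
    obtain ⟨hN, hL⟩ := h
    injection hL with hC hT
    injection hC with hc
    have hy : g * (ι₁ n * c) = g * (ι₁ n' * c') := by
      rw [← mul_assoc, ← mul_assoc]
      conv_lhs => rw [d₁.eq_dec (g * ι₁ n * c), hN, hc]
      conv_rhs => rw [d₁.eq_dec (g * ι₁ n' * c')]
    obtain ⟨hn, hcc⟩ := d₁.uniq hgc hgc' (lcan _ _ hy)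
    rw [hn, hcc, hT]
  | Sum.inl c :: t, Sum.inr c' :: t' =>
    obtain ⟨hgc, hc1⟩ := wg_head_inl d₁ d₂ hw
    rw [rawAct1_inl, rawAct1_inr] at h
    exact absurd h (mixcase n n' c t _ (notInl_inr _ _) hgc hc1)
  | Sum.inl c :: t, [] =>
    obtain ⟨hgc, hc1⟩ := wg_head_inl d₁ d₂ hw
    rw [rawAct1_inl, rawAct1_nil] at h
    exact absurd h (mixcase n n' c t _ (notInl_nil) hgc hc1)
  | Sum.inr c :: t, Sum.inl c' :: t' =>
    obtain ⟨hgc', hc1'⟩ := wg_head_inl d₁ d₂ hw'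
    rw [rawAct1_inr, rawAct1_inl] at h
    exact absurd h.symm (mixcase n' n c' t' _ (notInl_inr _ _) hgc' hc1')
  | [], Sum.inl c' :: t' =>
    obtain ⟨hgc', hc1'⟩ := wg_head_inl d₁ d₂ hw'
    rw [rawAct1_nil, rawAct1_inl] at h
    exact absurd h.symm (mixcase n' n c' t' _ (notInl_nil) hgc' hc1')
  | Sum.inr c :: t, Sum.inr c' :: t' =>
    rw [rawAct1_inr, rawAct1_inr] at h
    obtain ⟨hn, hl⟩ := extcase n n' _ _ (notInl_inr _ _) (notInl_inr _ _) h
    rw [hn, hl]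
  | Sum.inr c :: t, [] =>
    rw [rawAct1_inr, rawAct1_nil] at h
    obtain ⟨hn, hl⟩ := extcase n n' _ _ (notInl_inr _ _) (notInl_nil) h
    rw [hn, hl]
  | [], Sum.inr c' :: t' =>
    rw [rawAct1_nil, rawAct1_inr] at h
    obtain ⟨hn, hl⟩ := extcase n n' _ _ (notInl_nil)
      (notInl_inr _ _) h
    rw [hn, hl]
  | [], [] =>
    rw [rawAct1_nil, rawAct1_nil] at h
    obtain ⟨hn, hl⟩ := extcase n n' _ _ (notInl_nil)
      (notInl_nil) h
    rw [hn, hl]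

end Lemmas1

section Lemmas2

/-- The merged head syllable is not trivial. -/
theorem dC_merge_ne_one₂ (hs₂ : IsSpecial (MonoidHom.mrange ι₂)) {x : M₂} {c : M₂} (hgc : d₂.Good c) (hc1 : c ≠ 1) :
    d₂.dC (x * c) ≠ 1 := by
  intro h
  have hm : x * c ∈ MonoidHom.mrange ι₂ := (d₂.dC_eq_one_iff _).1 h
  exact hc1 (d₂.good_mem c hgc (hs₂ x c hm).2)

theorem good_rawAct2 (hs₂ : IsSpecial (MonoidHom.mrange ι₂)) (g : M₂) {w : N × List (M₁ ⊕ M₂)} (hw : WordGood d₁ d₂ w) :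
    WordGood d₁ d₂ (rawAct2 d₂ g w) := by
  obtain ⟨n, l⟩ := w
  match l with
  | [] =>
    rw [rawAct2_nil]
    by_cases h : d₂.dC (g * ι₂ n) = 1
    · rw [ext2_pos d₂ h]
      exact ⟨List.isChain_nil, by simp⟩
    · rw [ext2_neg d₂ h]
      refine ⟨List.isChain_singleton _, ?_⟩
      intro s hs
      rcases List.mem_singleton.1 hs with rfl
      exact ⟨d₂.good_dC _, h⟩
  | Sum.inr c :: t =>
    obtain ⟨hgc, hc1⟩ := wg_head_inr d₁ d₂ hw
    rw [rawAct2_inr]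
    obtain ⟨hch, hsyl⟩ := hw
    constructor
    · unfold List.Chain' at hch ⊢; rw [List.isChain_cons] at hch ⊢
      exact ⟨hch.1, hch.2⟩
    · intro s hs
      rcases List.mem_cons.1 hs with rfl | hs
      · exact ⟨d₂.good_dC _, dC_merge_ne_one₂ d₂ hs₂ hgc hc1⟩
      · exact hsyl s (List.mem_cons_of_mem _ hs)
  | Sum.inl c :: t =>
    rw [rawAct2_inl]
    by_cases h : d₂.dC (g * ι₂ n) = 1
    · rw [ext2_pos d₂ h]; exact hw
    · rw [ext2_neg d₂ h]
      obtain ⟨hch, hsyl⟩ := hw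
      constructor
      · unfold List.Chain'; rw [List.isChain_cons]
        refine ⟨?_, hch⟩
        intro y hy
        simp only [List.head?_cons, Option.mem_def, Option.some.injEq] at hy
        subst hy
        simp
      · intro s hs
        rcases List.mem_cons.1 hs with rfl | hs
        · exact ⟨d₂.good_dC _, h⟩
        · exact hsyl s hs

theorem rawAct2_one {w : N × List (M₁ ⊕ M₂)} (hw : WordGood d₁ d₂ w) :
    rawAct2 d₂ 1 w = w := by
  obtain ⟨n, l⟩ := w
  match l with
  | [] =>
    rw [rawAct2_nil, one_mul, ext2_pos d₂ (d₂.dC_iota n), d₂.dN_iota n]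
  | Sum.inr c :: t =>
    obtain ⟨hgc, _⟩ := wg_head_inr d₁ d₂ hw
    rw [rawAct2_inr, one_mul, d₂.dC_mul n c hgc, d₂.dN_mul n c hgc]
  | Sum.inl c :: t =>
    rw [rawAct2_inl, one_mul, ext2_pos d₂ (d₂.dC_iota n), d₂.dN_iota n]

theorem rawAct2_iota (ν : N) {w : N × List (M₁ ⊕ M₂)} (hw : WordGood d₁ d₂ w) :
    rawAct2 d₂ (ι₂ ν) w = (ν * w.1, w.2) := by
  obtain ⟨n, l⟩ := w
  match l with
  | [] =>
    rw [rawAct2_nil, ← map_mul, ext2_pos d₂ (d₂.dC_iota _), d₂.dN_iota]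
  | Sum.inr c :: t =>
    obtain ⟨hgc, _⟩ := wg_head_inr d₁ d₂ hw
    rw [rawAct2_inr, ← map_mul, d₂.dC_mul _ c hgc, d₂.dN_mul _ c hgc]
  | Sum.inl c :: t =>
    rw [rawAct2_inl, ← map_mul, ext2_pos d₂ (d₂.dC_iota _), d₂.dN_iota]

theorem rawAct2_mul (hs₂ : IsSpecial (MonoidHom.mrange ι₂)) (g g' : M₂) {w : N × List (M₁ ⊕ M₂)} (hw : WordGood d₁ d₂ w) :
    rawAct2 d₂ (g * g') w = rawAct2 d₂ g (rawAct2 d₂ g' w) := by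
  obtain ⟨n, l⟩ := w
  match l with
  | Sum.inr c :: t =>
    obtain ⟨hgc, hc1⟩ := wg_head_inr d₁ d₂ hw
    rw [rawAct2_inr, rawAct2_inr, rawAct2_inr]
    have hz : g * ι₂ (d₂.dN (g' * ι₂ n * c)) * d₂.dC (g' * ι₂ n * c) = g * g' * ι₂ n * c := by
      rw [mul_assoc g, ← d₂.eq_dec (g' * ι₂ n * c)]
      simp only [mul_assoc]
    rw [hz]
  | Sum.inl c :: t =>
    rw [rawAct2_inl, rawAct2_inl]
    by_cases h : d₂.dC (g' * ι₂ n) = 1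
    · rw [ext2_pos d₂ h, rawAct2_inl]
      have hy : g * ι₂ (d₂.dN (g' * ι₂ n)) = g * g' * ι₂ n := by
        conv_rhs => rw [mul_assoc, d₂.eq_dec (g' * ι₂ n), h, mul_one]
      rw [hy]
    · rw [ext2_neg d₂ h, rawAct2_inr]
      have hy : g * ι₂ (d₂.dN (g' * ι₂ n)) * d₂.dC (g' * ι₂ n) = g * g' * ι₂ n := by
        rw [mul_assoc g, ← d₂.eq_dec (g' * ι₂ n), ← mul_assoc]
      rw [hy]
      have h2 : ¬ d₂.dC (g * g' * ι₂ n) = 1 := by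
        intro h2
        have hm : g * (g' * ι₂ n) ∈ MonoidHom.mrange ι₂ := by
          rw [← mul_assoc]; exact (d₂.dC_eq_one_iff _).1 h2
        exact h ((d₂.dC_eq_one_iff _).2 (hs₂ g (g' * ι₂ n) hm).2)
      rw [ext2_neg d₂ h2]
  | [] =>
    rw [rawAct2_nil, rawAct2_nil]
    by_cases h : d₂.dC (g' * ι₂ n) = 1
    · rw [ext2_pos d₂ h, rawAct2_nil]
      have hy : g * ι₂ (d₂.dN (g' * ι₂ n)) = g * g' * ι₂ n := by
        conv_rhs => rw [mul_assoc, d₂.eq_dec (g' * ι₂ n), h, mul_one]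
      rw [hy]
    · rw [ext2_neg d₂ h, rawAct2_inr]
      have hy : g * ι₂ (d₂.dN (g' * ι₂ n)) * d₂.dC (g' * ι₂ n) = g * g' * ι₂ n := by
        rw [mul_assoc g, ← d₂.eq_dec (g' * ι₂ n), ← mul_assoc]
      rw [hy]
      have h2 : ¬ d₂.dC (g * g' * ι₂ n) = 1 := by
        intro h2
        have hm : g * (g' * ι₂ n) ∈ MonoidHom.mrange ι₂ := by
          rw [← mul_assoc]; exact (d₂.dC_eq_one_iff _).1 h2
        exact h ((d₂.dC_eq_one_iff _).2 (hs₂ g (g' * ι₂ n) hm).2)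
      rw [ext2_neg d₂ h2]

theorem rawAct2_inj (hι₂ : Function.Injective ι₂) (hc₂ : IsCancellative M₂) (g : M₂) {w w' : N × List (M₁ ⊕ M₂)}
    (hw : WordGood d₁ d₂ w) (hw' : WordGood d₁ d₂ w')
    (h : rawAct2 d₂ g w = rawAct2 d₂ g w') : w = w' := by
  -- left cancellation in M₂
  have lcan : ∀ a b : M₂, g * a = g * b → a = b := by
    intro a b hab
    exact hc₂ a b g 1 (by rw [mul_one, mul_one]; exact hab)
  obtain ⟨n, l⟩ := w
  obtain ⟨n', l'⟩ := w'
  -- helper: ext2 vs ext2 when both lists do not start with inl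
  have extcase : ∀ (m m' : N) (t t' : List (M₁ ⊕ M₂)),
      (∀ c s, t ≠ Sum.inr c :: s) → (∀ c s, t' ≠ Sum.inr c :: s) →
      ext2 d₂ (g * ι₂ m) t = ext2 d₂ (g * ι₂ m') t' → m = m' ∧ t = t' := by
    intro m m' t t' ht ht' hx
    by_cases h1 : d₂.dC (g * ι₂ m) = 1 <;> by_cases h2 : d₂.dC (g * ι₂ m') = 1
    · rw [ext2_pos d₂ h1, ext2_pos d₂ h2] at hx
      rw [Prod.mk.injEq] at hx
      obtain ⟨hN, hL⟩ := hx
      have hy : g * ι₂ m = g * ι₂ m' := by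
        conv_lhs => rw [d₂.eq_dec (g * ι₂ m), h1, mul_one, hN]
        conv_rhs => rw [d₂.eq_dec (g * ι₂ m'), h2, mul_one]
      exact ⟨hι₂ (lcan _ _ hy), hL⟩
    · rw [ext2_pos d₂ h1, ext2_neg d₂ h2] at hx
      rw [Prod.mk.injEq] at hx
      obtain ⟨hN, hL⟩ := hx
      exact absurd hL (ht _ _)
    · rw [ext2_neg d₂ h1, ext2_pos d₂ h2] at hx
      rw [Prod.mk.injEq] at hx
      obtain ⟨hN, hL⟩ := hx
      exact absurd hL.symm (ht' _ _)
    · rw [ext2_neg d₂ h1, ext2_neg d₂ h2] at hx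
      rw [Prod.mk.injEq] at hx
      obtain ⟨hN, hL⟩ := hx
      injection hL with hC hT
      injection hC with hc
      have hy : g * ι₂ m = g * ι₂ m' := by
        conv_lhs => rw [d₂.eq_dec (g * ι₂ m), hN, hc]
        conv_rhs => rw [d₂.eq_dec (g * ι₂ m')]
      exact ⟨hι₂ (lcan _ _ hy), hT⟩
  -- helper : inl-headed vs not
  have mixcase : ∀ (m m' : N) (c : M₂) (t t' : List (M₁ ⊕ M₂)),
      (∀ c s, t' ≠ Sum.inr c :: s) → d₂.Good c → c ≠ 1 →
      (d₂.dN (g * ι₂ m * c), Sum.inr (d₂.dC (g * ι₂ m * c)) :: t) ≠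
        ext2 d₂ (g * ι₂ m') t' := by
    intro m m' c t t' ht' hgc hc1 hx
    by_cases h2 : d₂.dC (g * ι₂ m') = 1
    · rw [ext2_pos d₂ h2] at hx
      rw [Prod.mk.injEq] at hx
      obtain ⟨hN, hL⟩ := hx
      exact ht' _ _ hL.symm
    · rw [ext2_neg d₂ h2] at hx
      rw [Prod.mk.injEq] at hx
      obtain ⟨hN, hL⟩ := hx
      injection hL with hC hT
      injection hC with hc
      have hy : g * (ι₂ m * c) = g * (ι₂ m' * 1) := by
        rw [mul_one, ← mul_assoc]
        conv_lhs => rw [d₂.eq_dec (g * ι₂ m * c), hN, hc]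
        conv_rhs => rw [d₂.eq_dec (g * ι₂ m')]
      obtain ⟨_, hce⟩ := d₂.uniq hgc d₂.good_one (lcan _ _ hy)
      exact hc1 hce
  have notInl_nil : ∀ (c : M₂) s, ([] : List (M₁ ⊕ M₂)) ≠ Sum.inr c :: s := by
    intro c s hh; cases hh
  have notInl_inr : ∀ (c' : M₁) (t : List (M₁ ⊕ M₂)) (c : M₂) s,
      (Sum.inl c' :: t : List (M₁ ⊕ M₂)) ≠ Sum.inr c :: s := by
    intro c' t c s hh
    injection hh with h1 _
    cases h1
  match l, l' with
  | Sum.inr c :: t, Sum.inr c' :: t' =>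
    obtain ⟨hgc, hc1⟩ := wg_head_inr d₁ d₂ hw
    obtain ⟨hgc', hc1'⟩ := wg_head_inr d₁ d₂ hw'
    rw [rawAct2_inr, rawAct2_inr] at h
    rw [Prod.mk.injEq] at h
    obtain ⟨hN, hL⟩ := h
    injection hL with hC hT
    injection hC with hc
    have hy : g * (ι₂ n * c) = g * (ι₂ n' * c') := by
      rw [← mul_assoc, ← mul_assoc]
      conv_lhs => rw [d₂.eq_dec (g * ι₂ n * c), hN, hc]
      conv_rhs => rw [d₂.eq_dec (g * ι₂ n' * c')]
    obtain ⟨hn, hcc⟩ := d₂.uniq hgc hgc' (lcan _ _ hy)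
    rw [hn, hcc, hT]
  | Sum.inr c :: t, Sum.inl c' :: t' =>
    obtain ⟨hgc, hc1⟩ := wg_head_inr d₁ d₂ hw
    rw [rawAct2_inr, rawAct2_inl] at h
    exact absurd h (mixcase n n' c t _ (notInl_inr _ _) hgc hc1)
  | Sum.inr c :: t, [] =>
    obtain ⟨hgc, hc1⟩ := wg_head_inr d₁ d₂ hw
    rw [rawAct2_inr, rawAct2_nil] at h
    exact absurd h (mixcase n n' c t _ (notInl_nil) hgc hc1)
  | Sum.inl c :: t, Sum.inr c' :: t' =>
    obtain ⟨hgc', hc1'⟩ := wg_head_inr d₁ d₂ hw'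
    rw [rawAct2_inl, rawAct2_inr] at h
    exact absurd h.symm (mixcase n' n c' t' _ (notInl_inr _ _) hgc' hc1')
  | [], Sum.inr c' :: t' =>
    obtain ⟨hgc', hc1'⟩ := wg_head_inr d₁ d₂ hw'
    rw [rawAct2_nil, rawAct2_inr] at h
    exact absurd h.symm (mixcase n' n c' t' _ (notInl_nil) hgc' hc1')
  | Sum.inl c :: t, Sum.inl c' :: t' =>
    rw [rawAct2_inl, rawAct2_inl] at h
    obtain ⟨hn, hl⟩ := extcase n n' _ _ (notInl_inr _ _) (notInl_inr _ _) h
    rw [hn, hl]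
  | Sum.inl c :: t, [] =>
    rw [rawAct2_inl, rawAct2_nil] at h
    obtain ⟨hn, hl⟩ := extcase n n' _ _ (notInl_inr _ _) (notInl_nil) h
    rw [hn, hl]
  | [], Sum.inl c' :: t' =>
    rw [rawAct2_nil, rawAct2_inl] at h
    obtain ⟨hn, hl⟩ := extcase n n' _ _ (notInl_nil)
      (notInl_inr _ _) h
    rw [hn, hl]
  | [], [] =>
    rw [rawAct2_nil, rawAct2_nil] at h
    obtain ⟨hn, hl⟩ := extcase n n' _ _ (notInl_nil)
      (notInl_nil) h
    rw [hn, hl]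

end Lemmas2


end Action

section Bundle

variable {M₁ M₂ N : Type*} [Monoid M₁] [Monoid M₂] [Monoid N]

/-- Good words. -/
def GWord {ι₁ : N →* M₁} {ι₂ : N →* M₂} (d₁ : DecompData ι₁) (d₂ : DecompData ι₂) :=
  {w : N × List (M₁ ⊕ M₂) // WordGood d₁ d₂ w}

/-- Canonical map `M₁ →*` quotient. -/
def inlQ (ι₁ : N →* M₁) (ι₂ : N →* M₂) : M₁ →* (amalgamCon ι₁ ι₂).Quotient :=
  (amalgamCon ι₁ ι₂).mk'.comp Monoid.Coprod.inl

/-- Canonical map `M₂ →*` quotient. -/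
def inrQ (ι₁ : N →* M₁) (ι₂ : N →* M₂) : M₂ →* (amalgamCon ι₁ ι₂).Quotient :=
  (amalgamCon ι₁ ι₂).mk'.comp Monoid.Coprod.inr

/-- Syllables map to the amalgam. -/
def toAm (ι₁ : N →* M₁) (ι₂ : N →* M₂) : (M₁ ⊕ M₂) → (amalgamCon ι₁ ι₂).Quotient :=
  Sum.elim (inlQ ι₁ ι₂) (inrQ ι₁ ι₂)

/-- Value of a word in the amalgam. -/
def wval (ι₁ : N →* M₁) (ι₂ : N →* M₂) (w : N × List (M₁ ⊕ M₂)) :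
    (amalgamCon ι₁ ι₂).Quotient :=
  inlQ ι₁ ι₂ (ι₁ w.1) * (w.2.map (toAm ι₁ ι₂)).prod

theorem inl_iota_eq (ι₁ : N →* M₁) (ι₂ : N →* M₂) (ν : N) :
    inlQ ι₁ ι₂ (ι₁ ν) = inrQ ι₁ ι₂ (ι₂ ν) :=
  ((amalgamCon ι₁ ι₂).eq).2 (ConGen.Rel.of _ _ ⟨ν, rfl, rfl⟩)

variable {ι₁ : N →* M₁} {ι₂ : N →* M₂} (d₁ : DecompData ι₁) (d₂ : DecompData ι₂)

/-- `M₁` acts on good words. -/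
noncomputable def actHom1 (hs₁ : IsSpecial (MonoidHom.mrange ι₁)) :
    M₁ →* Function.End (GWord d₁ d₂) where
  toFun g w := ⟨rawAct1 d₁ g w.1, good_rawAct1 d₁ d₂ hs₁ g w.2⟩
  map_one' := funext fun w => Subtype.ext (rawAct1_one d₁ d₂ w.2)
  map_mul' g g' := funext fun w => Subtype.ext (rawAct1_mul d₁ d₂ hs₁ g g' w.2)

/-- `M₂` acts on good words. -/
noncomputable def actHom2 (hs₂ : IsSpecial (MonoidHom.mrange ι₂)) :
    M₂ →* Function.End (GWord d₁ d₂) where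
  toFun g w := ⟨rawAct2 d₂ g w.1, good_rawAct2 d₁ d₂ hs₂ g w.2⟩
  map_one' := funext fun w => Subtype.ext (rawAct2_one d₁ d₂ w.2)
  map_mul' g g' := funext fun w => Subtype.ext (rawAct2_mul d₁ d₂ hs₂ g g' w.2)

variable (hs₁ : IsSpecial (MonoidHom.mrange ι₁)) (hs₂ : IsSpecial (MonoidHom.mrange ι₂))

noncomputable def phiHom : Monoid.Coprod M₁ M₂ →* Function.End (GWord d₁ d₂) :=
  Monoid.Coprod.lift (actHom1 d₁ d₂ hs₁) (actHom2 d₁ d₂ hs₂)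

theorem phiHom_ker : amalgamCon ι₁ ι₂ ≤ Con.ker (phiHom d₁ d₂ hs₁ hs₂) := by
  apply Con.conGen_le.2
  rintro a b ⟨ν, rfl, rfl⟩
  rw [Con.ker_rel, phiHom, Monoid.Coprod.lift_apply_inl, Monoid.Coprod.lift_apply_inr]
  funext w
  apply Subtype.ext
  change rawAct1 d₁ (ι₁ ν) w.1 = rawAct2 d₂ (ι₂ ν) w.1
  rw [rawAct1_iota d₁ d₂ ν w.2, rawAct2_iota d₁ d₂ ν w.2]

noncomputable def qHom : (amalgamCon ι₁ ι₂).Quotient →* Function.End (GWord d₁ d₂) :=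
  Con.lift _ (phiHom d₁ d₂ hs₁ hs₂) (phiHom_ker d₁ d₂ hs₁ hs₂)

theorem wval_rawAct1 (g : M₁) (w : N × List (M₁ ⊕ M₂)) :
    wval ι₁ ι₂ (rawAct1 d₁ g w) =
      inlQ ι₁ ι₂ g * wval ι₁ ι₂ w := by
  obtain ⟨n, l⟩ := w
  match l with
  | Sum.inl c :: t =>
    rw [rawAct1_inl]
    simp only [wval, List.map_cons, List.prod_cons, toAm, Sum.elim_inl, ← mul_assoc, ← map_mul]
    rw [← d₁.eq_dec]
  | Sum.inr c :: t =>
    rw [rawAct1_inr]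
    by_cases h : d₁.dC (g * ι₁ n) = 1
    · rw [ext1_pos d₁ h]
      have hy : ι₁ (d₁.dN (g * ι₁ n)) = g * ι₁ n := by
        conv_rhs => rw [d₁.eq_dec (g * ι₁ n), h, mul_one]
      simp only [wval, hy, ← mul_assoc, ← map_mul]
    · rw [ext1_neg d₁ h]
      simp only [wval, List.map_cons, List.prod_cons, toAm, Sum.elim_inl, ← mul_assoc, ← map_mul]
      rw [← d₁.eq_dec]
  | [] =>
    rw [rawAct1_nil]
    by_cases h : d₁.dC (g * ι₁ n) = 1
    · rw [ext1_pos d₁ h]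
      have hy : ι₁ (d₁.dN (g * ι₁ n)) = g * ι₁ n := by
        conv_rhs => rw [d₁.eq_dec (g * ι₁ n), h, mul_one]
      simp only [wval, hy, ← mul_assoc, ← map_mul]
    · rw [ext1_neg d₁ h]
      simp only [wval, List.map_cons, List.prod_cons, toAm, Sum.elim_inl, ← mul_assoc, ← map_mul]
      rw [← d₁.eq_dec]

theorem wval_rawAct2 (g : M₂) (w : N × List (M₁ ⊕ M₂)) :
    wval ι₁ ι₂ (rawAct2 d₂ g w) =
      inrQ ι₁ ι₂ g * wval ι₁ ι₂ w := by
  obtain ⟨n, l⟩ := w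
  match l with
  | Sum.inr c :: t =>
    rw [rawAct2_inr]
    simp only [wval, List.map_cons, List.prod_cons, toAm, Sum.elim_inr, inl_iota_eq ι₁ ι₂,
      ← mul_assoc, ← map_mul]
    rw [← d₂.eq_dec]
  | Sum.inl c :: t =>
    rw [rawAct2_inl]
    by_cases h : d₂.dC (g * ι₂ n) = 1
    · rw [ext2_pos d₂ h]
      have hy : ι₂ (d₂.dN (g * ι₂ n)) = g * ι₂ n := by
        conv_rhs => rw [d₂.eq_dec (g * ι₂ n), h, mul_one]
      simp only [wval, inl_iota_eq ι₁ ι₂, hy, ← mul_assoc, ← map_mul]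
    · rw [ext2_neg d₂ h]
      simp only [wval, List.map_cons, List.prod_cons, toAm, Sum.elim_inr, inl_iota_eq ι₁ ι₂,
        ← mul_assoc, ← map_mul]
      rw [← d₂.eq_dec]
  | [] =>
    rw [rawAct2_nil]
    by_cases h : d₂.dC (g * ι₂ n) = 1
    · rw [ext2_pos d₂ h]
      have hy : ι₂ (d₂.dN (g * ι₂ n)) = g * ι₂ n := by
        conv_rhs => rw [d₂.eq_dec (g * ι₂ n), h, mul_one]
      simp only [wval, inl_iota_eq ι₁ ι₂, hy, ← mul_assoc, ← map_mul]
    · rw [ext2_neg d₂ h]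
      simp only [wval, List.map_cons, List.prod_cons, toAm, Sum.elim_inr, inl_iota_eq ι₁ ι₂,
        ← mul_assoc, ← map_mul]
      rw [← d₂.eq_dec]

theorem inlQ_eq_coe (m : M₁) :
    inlQ ι₁ ι₂ m = ((Monoid.Coprod.inl m : Monoid.Coprod M₁ M₂) :
      (amalgamCon ι₁ ι₂).Quotient) := rfl

theorem inrQ_eq_coe (m : M₂) :
    inrQ ι₁ ι₂ m = ((Monoid.Coprod.inr m : Monoid.Coprod M₁ M₂) :
      (amalgamCon ι₁ ι₂).Quotient) := rfl

theorem wval_qHom (x : (amalgamCon ι₁ ι₂).Quotient) :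
    ∀ w : GWord d₁ d₂, wval ι₁ ι₂ ((qHom d₁ d₂ hs₁ hs₂ x) w).1 = x * wval ι₁ ι₂ w.1 := by
  induction x using Con.induction_on with
  | _ y =>
    induction y using Monoid.Coprod.induction_on with
    | inl m =>
      intro w
      have h1 : qHom d₁ d₂ hs₁ hs₂ ↑(Monoid.Coprod.inl m : Monoid.Coprod M₁ M₂) =
          actHom1 d₁ d₂ hs₁ m := by
        rw [qHom, Con.lift_coe, phiHom, Monoid.Coprod.lift_apply_inl]
      rw [h1, ← inlQ_eq_coe]
      exact wval_rawAct1 d₁ m w.1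
    | inr m =>
      intro w
      have h1 : qHom d₁ d₂ hs₁ hs₂ ↑(Monoid.Coprod.inr m : Monoid.Coprod M₁ M₂) =
          actHom2 d₁ d₂ hs₂ m := by
        rw [qHom, Con.lift_coe, phiHom, Monoid.Coprod.lift_apply_inr]
      rw [h1, ← inrQ_eq_coe]
      exact wval_rawAct2 d₂ m w.1
    | mul y z ihy ihz =>
      intro w
      have hcoe : ((y * z : Monoid.Coprod M₁ M₂) : (amalgamCon ι₁ ι₂).Quotient)
          = (y : (amalgamCon ι₁ ι₂).Quotient) * (z : (amalgamCon ι₁ ι₂).Quotient) := rfl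
      rw [hcoe, map_mul]
      show wval ι₁ ι₂ ((qHom d₁ d₂ hs₁ hs₂ ↑y) ((qHom d₁ d₂ hs₁ hs₂ ↑z) w)).1 = _
      rw [ihy, ihz, mul_assoc]

theorem qHom_inj (hι₁ : Function.Injective ι₁) (hι₂ : Function.Injective ι₂)
    (hc₁ : IsCancellative M₁) (hc₂ : IsCancellative M₂) (x : (amalgamCon ι₁ ι₂).Quotient) :
    Function.Injective (qHom d₁ d₂ hs₁ hs₂ x) := by
  induction x using Con.induction_on with
  | _ y =>
    induction y using Monoid.Coprod.induction_on with
    | inl m =>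
      have h1 : qHom d₁ d₂ hs₁ hs₂ ↑(Monoid.Coprod.inl m : Monoid.Coprod M₁ M₂) =
          actHom1 d₁ d₂ hs₁ m := by
        rw [qHom, Con.lift_coe, phiHom, Monoid.Coprod.lift_apply_inl]
      rw [h1]
      intro w w' h
      have hvv : rawAct1 d₁ m w.1 = rawAct1 d₁ m w'.1 := congrArg Subtype.val h
      exact Subtype.ext (rawAct1_inj d₁ d₂ hι₁ hc₁ m w.2 w'.2 hvv)
    | inr m =>
      have h1 : qHom d₁ d₂ hs₁ hs₂ ↑(Monoid.Coprod.inr m : Monoid.Coprod M₁ M₂) =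
          actHom2 d₁ d₂ hs₂ m := by
        rw [qHom, Con.lift_coe, phiHom, Monoid.Coprod.lift_apply_inr]
      rw [h1]
      intro w w' h
      have hvv : rawAct2 d₂ m w.1 = rawAct2 d₂ m w'.1 := congrArg Subtype.val h
      exact Subtype.ext (rawAct2_inj d₁ d₂ hι₂ hc₂ m w.2 w'.2 hvv)
    | mul y z ihy ihz =>
      have hcoe : ((y * z : Monoid.Coprod M₁ M₂) : (amalgamCon ι₁ ι₂).Quotient)
          = (y : (amalgamCon ι₁ ι₂).Quotient) * (z : (amalgamCon ι₁ ι₂).Quotient) := rfl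
      rw [hcoe, map_mul]
      exact Function.Injective.comp ihy ihz

end Bundle

section LeftCancel

variable {M₁ M₂ N : Type*} [Monoid M₁] [Monoid M₂] [Monoid N]
variable (ι₁ : N →* M₁) (ι₂ : N →* M₂)

theorem amalgam_left_cancel (hι₁ : Function.Injective ι₁) (hι₂ : Function.Injective ι₂)
    (hs₁ : IsSpecial (MonoidHom.mrange ι₁)) (hs₂ : IsSpecial (MonoidHom.mrange ι₂))
    (hc₁ : IsCancellative M₁) (hc₂ : IsCancellative M₂)
    (hL₁ : LConfluence (MonoidHom.mrange ι₁)) (hL₂ : LConfluence (MonoidHom.mrange ι₂)) :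
    ∀ x a b : (amalgamCon ι₁ ι₂).Quotient, x * a = x * b → a = b := by
  obtain ⟨d₁⟩ := exists_decompData ι₁ hι₁ hs₁ hc₁ hL₁
  obtain ⟨d₂⟩ := exists_decompData ι₂ hι₂ hs₂ hc₂ hL₂
  intro x a b h
  have he : WordGood d₁ d₂ ((1 : N), ([] : List (M₁ ⊕ M₂))) := ⟨List.isChain_nil, by simp⟩
  set e : GWord d₁ d₂ := ⟨((1 : N), ([] : List (M₁ ⊕ M₂))), he⟩ with hedef
  have hval : ∀ z : (amalgamCon ι₁ ι₂).Quotient, wval ι₁ ι₂ ((qHom d₁ d₂ hs₁ hs₂ z) e).1 = z := by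
    intro z
    rw [wval_qHom]
    show z * wval ι₁ ι₂ ((1 : N), ([] : List (M₁ ⊕ M₂))) = z
    simp [wval]
  have h2 : (qHom d₁ d₂ hs₁ hs₂ x) ((qHom d₁ d₂ hs₁ hs₂ a) e) =
      (qHom d₁ d₂ hs₁ hs₂ x) ((qHom d₁ d₂ hs₁ hs₂ b) e) := by
    have ha : (qHom d₁ d₂ hs₁ hs₂ (x * a)) e = (qHom d₁ d₂ hs₁ hs₂ x) ((qHom d₁ d₂ hs₁ hs₂ a) e) := by
      rw [map_mul]; rfl
    have hb : (qHom d₁ d₂ hs₁ hs₂ (x * b)) e = (qHom d₁ d₂ hs₁ hs₂ x) ((qHom d₁ d₂ hs₁ hs₂ b) e) := by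
      rw [map_mul]; rfl
    rw [← ha, ← hb, h]
  have h3 := qHom_inj d₁ d₂ hs₁ hs₂ hι₁ hι₂ hc₁ hc₂ x h2
  have h4 := congrArg (fun w : GWord d₁ d₂ => wval ι₁ ι₂ w.1) h3
  rw [← hval a, ← hval b, h4]

end LeftCancel

section OpTransport

variable {M N : Type*} [Monoid M] [Monoid N]

theorem op_injective {ι : N →* M} (hι : Function.Injective ι) :
    Function.Injective (MonoidHom.op ι) := by
  intro a b h
  apply MulOpposite.unop_injective
  apply hι
  have := congrArg MulOpposite.unop h
  exact this

theorem mem_mrange_op {ι : N →* M} (x : Mᵐᵒᵖ) :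
    x ∈ MonoidHom.mrange (MonoidHom.op ι) ↔ x.unop ∈ MonoidHom.mrange ι := by
  constructor
  · rintro ⟨n, rfl⟩
    exact ⟨n.unop, rfl⟩
  · rintro ⟨n, hn⟩
    exact ⟨MulOpposite.op n, MulOpposite.unop_injective (show (ι n : M) = x.unop from hn)⟩

theorem op_special {ι : N →* M} (hs : IsSpecial (MonoidHom.mrange ι)) :
    IsSpecial (MonoidHom.mrange (MonoidHom.op ι)) := by
  intro a b hab
  rw [mem_mrange_op] at hab
  have : b.unop * a.unop ∈ MonoidHom.mrange ι := hab
  obtain ⟨h1, h2⟩ := hs _ _ this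
  exact ⟨(mem_mrange_op a).2 h2, (mem_mrange_op b).2 h1⟩

theorem op_cancellative (hc : IsCancellative M) : IsCancellative Mᵐᵒᵖ := by
  intro a b c d h
  apply MulOpposite.unop_injective
  apply hc a.unop b.unop d.unop c.unop
  have := congrArg MulOpposite.unop h
  simpa [mul_assoc] using this

theorem op_coset {ι : N →* M} (g : Mᵐᵒᵖ) :
    LCoset (MonoidHom.mrange (MonoidHom.op ι)) g =
      MulOpposite.unop ⁻¹' (RCoset (MonoidHom.mrange ι) g.unop) := by
  ext x
  constructor
  · rintro ⟨h, hh, rfl⟩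
    exact ⟨h.unop, (mem_mrange_op h).1 hh, rfl⟩
  · rintro ⟨h, hh, hx⟩
    refine ⟨MulOpposite.op h, (mem_mrange_op _).2 (by simpa using hh), ?_⟩
    apply MulOpposite.unop_injective
    simpa using hx

theorem op_coset_mem {ι : N →* M} (x g : Mᵐᵒᵖ) :
    x ∈ LCoset (MonoidHom.mrange (MonoidHom.op ι)) g ↔
      x.unop ∈ RCoset (MonoidHom.mrange ι) g.unop := by
  rw [op_coset]; rfl

theorem op_lreduces {ι : N →* M} {B A : Set Mᵐᵒᵖ}
    (h : LReduces (MonoidHom.mrange (MonoidHom.op ι)) B A) :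
    RReduces (MonoidHom.mrange ι) (MulOpposite.op ⁻¹' B) (MulOpposite.op ⁻¹' A) := by
  obtain ⟨g₁, g₂, rfl, rfl, hg₂, hg₁⟩ := h
  have key : ∀ g : Mᵐᵒᵖ, MulOpposite.op ⁻¹' (LCoset (MonoidHom.mrange (MonoidHom.op ι)) g) =
      RCoset (MonoidHom.mrange ι) g.unop := by
    intro g
    rw [op_coset]
    ext x
    simp
  refine ⟨g₁.unop, g₂.unop, key g₁, key g₂, ?_, ?_⟩
  · exact (op_coset_mem g₂ g₁).1 hg₂
  · intro hmem
    exact hg₁ ((op_coset_mem g₁ g₂).2 hmem)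

theorem op_rreduces {ι : N →* M} {X Y : Set M}
    (h : RReduces (MonoidHom.mrange ι) X Y) :
    LReduces (MonoidHom.mrange (MonoidHom.op ι)) (MulOpposite.unop ⁻¹' X)
      (MulOpposite.unop ⁻¹' Y) := by
  obtain ⟨g₁, g₂, rfl, rfl, hg₂, hg₁⟩ := h
  have e1 : ∀ g : M, MulOpposite.unop ⁻¹' RCoset (MonoidHom.mrange ι) g =
      LCoset (MonoidHom.mrange (MonoidHom.op ι)) (MulOpposite.op g) := by
    intro g
    rw [op_coset, MulOpposite.unop_op]
  refine ⟨MulOpposite.op g₁, MulOpposite.op g₂, e1 g₁, e1 g₂, ?_, ?_⟩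
  · rw [op_coset_mem]; simpa using hg₂
  · rw [op_coset_mem]; simpa using hg₁

theorem op_lconfluence {ι : N →* M} (hR : RConfluence (MonoidHom.mrange ι)) :
    LConfluence (MonoidHom.mrange (MonoidHom.op ι)) := by
  constructor
  · rintro ⟨f, hf⟩
    exact hR.1 ⟨fun n => MulOpposite.op ⁻¹' (f n), fun n => op_lreduces (hf n)⟩
  · intro C A B hCA hCB
    obtain ⟨D, hAD, hBD⟩ := hR.2 (MulOpposite.op ⁻¹' C) (MulOpposite.op ⁻¹' A)
      (MulOpposite.op ⁻¹' B) (op_lreduces hCA) (op_lreduces hCB)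
    have hAeq : MulOpposite.unop ⁻¹' (MulOpposite.op ⁻¹' A) = A := by
      obtain ⟨g₁, g₂, rfl, _, _, _⟩ := hCA
      ext x; simp
    have hBeq : MulOpposite.unop ⁻¹' (MulOpposite.op ⁻¹' B) = B := by
      obtain ⟨g₁, g₂, rfl, _, _, _⟩ := hCB
      ext x; simp
    refine ⟨MulOpposite.unop ⁻¹' D, ?_, ?_⟩
    · have := Relation.ReflTransGen.lift (Set.preimage MulOpposite.unop)
        (fun a b hab => op_rreduces hab) _ _ hAD
      rwa [Function.onFun, hAeq] at this
    · have := Relation.ReflTransGen.lift (Set.preimage MulOpposite.unop)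
        (fun a b hab => op_rreduces hab) _ _ hBD
      rwa [Function.onFun, hBeq] at this

end OpTransport

section RightCancel

variable {M₁ M₂ N : Type*} [Monoid M₁] [Monoid M₂] [Monoid N]
variable (ι₁ : N →* M₁) (ι₂ : N →* M₂)

/-- The antihomomorphism from the `Coprod` into the opposite amalgam quotient. -/
noncomputable def antiInl : M₁ →* ((amalgamCon (MonoidHom.op ι₁) (MonoidHom.op ι₂)).Quotient)ᵐᵒᵖ where
  toFun m := MulOpposite.op (inlQ (MonoidHom.op ι₁) (MonoidHom.op ι₂) (MulOpposite.op m))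
  map_one' := by simp
  map_mul' a b := by
    apply MulOpposite.unop_injective
    simp [← map_mul]

noncomputable def antiInr : M₂ →* ((amalgamCon (MonoidHom.op ι₁) (MonoidHom.op ι₂)).Quotient)ᵐᵒᵖ where
  toFun m := MulOpposite.op (inrQ (MonoidHom.op ι₁) (MonoidHom.op ι₂) (MulOpposite.op m))
  map_one' := by simp
  map_mul' a b := by
    apply MulOpposite.unop_injective
    simp [← map_mul]

noncomputable def antiHom : (amalgamCon ι₁ ι₂).Quotient →*
    ((amalgamCon (MonoidHom.op ι₁) (MonoidHom.op ι₂)).Quotient)ᵐᵒᵖ := by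
  refine Con.lift _ (Monoid.Coprod.lift (antiInl ι₁ ι₂) (antiInr ι₁ ι₂)) ?_
  rw [amalgamCon, Con.conGen_le]
  rintro a b ⟨ν, rfl, rfl⟩
  rw [Con.ker_rel, Monoid.Coprod.lift_apply_inl, Monoid.Coprod.lift_apply_inr]
  show MulOpposite.op (inlQ _ _ (MulOpposite.op (ι₁ ν))) =
    MulOpposite.op (inrQ _ _ (MulOpposite.op (ι₂ ν)))
  apply congrArg
  exact inl_iota_eq (MonoidHom.op ι₁) (MonoidHom.op ι₂) (MulOpposite.op ν)

/-- The reverse antihomomorphism. -/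
noncomputable def antiInl' : M₁ᵐᵒᵖ →* ((amalgamCon ι₁ ι₂).Quotient)ᵐᵒᵖ where
  toFun m := MulOpposite.op (inlQ ι₁ ι₂ m.unop)
  map_one' := by simp
  map_mul' a b := by
    apply MulOpposite.unop_injective
    simp [← map_mul]

noncomputable def antiInr' : M₂ᵐᵒᵖ →* ((amalgamCon ι₁ ι₂).Quotient)ᵐᵒᵖ where
  toFun m := MulOpposite.op (inrQ ι₁ ι₂ m.unop)
  map_one' := by simp
  map_mul' a b := by
    apply MulOpposite.unop_injective
    simp [← map_mul]

noncomputable def antiHom' : (amalgamCon (MonoidHom.op ι₁) (MonoidHom.op ι₂)).Quotient →*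
    ((amalgamCon ι₁ ι₂).Quotient)ᵐᵒᵖ := by
  refine Con.lift _ (Monoid.Coprod.lift (antiInl' ι₁ ι₂) (antiInr' ι₁ ι₂)) ?_
  rw [amalgamCon, Con.conGen_le]
  rintro a b ⟨ν, rfl, rfl⟩
  rw [Con.ker_rel, Monoid.Coprod.lift_apply_inl, Monoid.Coprod.lift_apply_inr]
  show MulOpposite.op (inlQ ι₁ ι₂ ((MonoidHom.op ι₁ ν).unop)) =
    MulOpposite.op (inrQ ι₁ ι₂ ((MonoidHom.op ι₂ ν).unop))
  apply congrArg
  exact inl_iota_eq ι₁ ι₂ ν.unop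

theorem antiHom_retract (x : (amalgamCon ι₁ ι₂).Quotient) :
    (antiHom' ι₁ ι₂ ((antiHom ι₁ ι₂ x).unop)).unop = x := by
  induction x using Con.induction_on with
  | _ y =>
    induction y using Monoid.Coprod.induction_on with
    | inl m =>
      have h1 : antiHom ι₁ ι₂ ↑(Monoid.Coprod.inl m : Monoid.Coprod M₁ M₂) = antiInl ι₁ ι₂ m := by
        rw [antiHom, Con.lift_coe, Monoid.Coprod.lift_apply_inl]
      rw [h1]
      show (antiHom' ι₁ ι₂ (inlQ _ _ (MulOpposite.op m))).unop = _
      have h2 : antiHom' ι₁ ι₂ (inlQ (MonoidHom.op ι₁) (MonoidHom.op ι₂) (MulOpposite.op m)) =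
          antiInl' ι₁ ι₂ (MulOpposite.op m) := by
        rw [antiHom', inlQ]
        exact Con.lift_coe _ _ |>.trans (Monoid.Coprod.lift_apply_inl _ _ _)
      rw [h2]
      rfl
    | inr m =>
      have h1 : antiHom ι₁ ι₂ ↑(Monoid.Coprod.inr m : Monoid.Coprod M₁ M₂) = antiInr ι₁ ι₂ m := by
        rw [antiHom, Con.lift_coe, Monoid.Coprod.lift_apply_inr]
      rw [h1]
      show (antiHom' ι₁ ι₂ (inrQ _ _ (MulOpposite.op m))).unop = _
      have h2 : antiHom' ι₁ ι₂ (inrQ (MonoidHom.op ι₁) (MonoidHom.op ι₂) (MulOpposite.op m)) =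
          antiInr' ι₁ ι₂ (MulOpposite.op m) := by
        rw [antiHom', inrQ]
        exact Con.lift_coe _ _ |>.trans (Monoid.Coprod.lift_apply_inr _ _ _)
      rw [h2]
      rfl
    | mul y z ihy ihz =>
      have hcoe : ((y * z : Monoid.Coprod M₁ M₂) : (amalgamCon ι₁ ι₂).Quotient)
          = (y : (amalgamCon ι₁ ι₂).Quotient) * (z : (amalgamCon ι₁ ι₂).Quotient) := rfl
      rw [hcoe, map_mul, MulOpposite.unop_mul, map_mul, MulOpposite.unop_mul, ihy, ihz]

theorem antiHom_inj : Function.Injective (antiHom ι₁ ι₂) := by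
  intro a b h
  rw [← antiHom_retract ι₁ ι₂ a, ← antiHom_retract ι₁ ι₂ b, h]

theorem amalgam_right_cancel (hι₁ : Function.Injective ι₁) (hι₂ : Function.Injective ι₂)
    (hs₁ : IsSpecial (MonoidHom.mrange ι₁)) (hs₂ : IsSpecial (MonoidHom.mrange ι₂))
    (hc₁ : IsCancellative M₁) (hc₂ : IsCancellative M₂)
    (hR₁ : RConfluence (MonoidHom.mrange ι₁)) (hR₂ : RConfluence (MonoidHom.mrange ι₂)) :
    ∀ x a b : (amalgamCon ι₁ ι₂).Quotient, a * x = b * x → a = b := by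
  intro x a b h
  have LC := amalgam_left_cancel (MonoidHom.op ι₁) (MonoidHom.op ι₂)
    (op_injective hι₁) (op_injective hι₂) (op_special hs₁) (op_special hs₂)
    (op_cancellative hc₁) (op_cancellative hc₂) (op_lconfluence hR₁) (op_lconfluence hR₂)
  have h1 : antiHom ι₁ ι₂ (a * x) = antiHom ι₁ ι₂ (b * x) := by rw [h]
  rw [map_mul, map_mul] at h1
  have h2 : (antiHom ι₁ ι₂ x).unop * (antiHom ι₁ ι₂ a).unop =
      (antiHom ι₁ ι₂ x).unop * (antiHom ι₁ ι₂ b).unop := congrArg MulOpposite.unop h1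
  have h3 := LC _ _ _ h2
  exact antiHom_inj ι₁ ι₂ (MulOpposite.unop_injective h3)

end RightCancel

/-- **Corollary 3.7.** A special amalgam `M₁ *_N M₂` with `M₁, M₂` cancellative and `N`
having the confluence property in both is cancellative. -/
theorem corollary_3_7 {M₁ M₂ N : Type*} [Monoid M₁] [Monoid M₂] [Monoid N]
    (ι₁ : N →* M₁) (ι₂ : N →* M₂)
    (hι₁ : Function.Injective ι₁) (hι₂ : Function.Injective ι₂)
    (hs₁ : IsSpecial (MonoidHom.mrange ι₁)) (hs₂ : IsSpecial (MonoidHom.mrange ι₂))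
    (hc₁ : IsCancellative M₁) (hc₂ : IsCancellative M₂)
    (hconf₁ : Confluence (MonoidHom.mrange ι₁))
    (hconf₂ : Confluence (MonoidHom.mrange ι₂)) :
    IsCancellative (Amalgam ι₁ ι₂) := by
  intro a b c d h
  have hL := amalgam_left_cancel ι₁ ι₂ hι₁ hι₂ hs₁ hs₂ hc₁ hc₂ hconf₁.2 hconf₂.2
  have hR := amalgam_right_cancel ι₁ ι₂ hι₁ hι₂ hs₁ hs₂ hc₁ hc₂ hconf₁.1 hconf₂.1
  have h1 : c * (a * d) = c * (b * d) := by rw [← mul_assoc, ← mul_assoc]; exact h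
  have h2 := hL c (a * d) (b * d) h1
  exact hR d a b h2

end PG
end

section
/- Let M be a preGarside monoid and let N be a parabolic submonoid of M. Then N has the confluence property in M. Moreover, each minimal R_N-class (respectively, each minimal L_N-class) has a unique representative: if gN and g'N are minimal R_N-classes and gN = g'N, then g = g' (and symmetrically for classes Ng). -/
namespace PG

variable {M : Type*} [Monoid M]

section Aux

variable {M : Type*} [Monoid M]

private lemma no_descent (d : ℕ → ℕ) (h : ∀ n, d (n + 1) < d n) : False := by
  have key : ∀ n, d n + n ≤ d 0 := by
    intro n
    induction n with
    | zero => simp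
    | succ k ih => have := h k; omega
  have := key (d 0 + 1); omega

private lemma atomic_mul_eq_one (hA : IsAtomicMon M) {x y : M} (h : x * y = 1) :
    x = 1 ∧ y = 1 := by
  obtain ⟨ν, hpos, hadd⟩ := hA
  have h1 : ν (1 : M) = 0 := by have := hadd 1 1; simp only [mul_one] at this; omega
  have hxy := hadd x y
  rw [h, h1] at hxy
  constructor
  · by_contra hne; have := hpos x hne; omega
  · by_contra hne; have := hpos y hne; omega

private lemma rcoset_rep (hc : IsCancellative M) (hA : IsAtomicMon M) (N : Submonoid M)
    {g g' : M} (h : RCoset N g = RCoset N g') : g = g' := by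
  have hg : g ∈ RCoset N g' := h ▸ ⟨1, N.one_mem, (mul_one g).symm⟩
  have hg' : g' ∈ RCoset N g := h.symm ▸ ⟨1, N.one_mem, (mul_one g').symm⟩
  obtain ⟨k, _, hgk⟩ := hg
  obtain ⟨k', hk', hgk'⟩ := hg'
  have heq : g * (k' * k) = g * 1 := by rw [mul_one, ← mul_assoc, ← hgk', ← hgk]
  have h1 : k' * k = 1 := hc _ _ g 1 (by simpa using heq)
  have hk1 := (atomic_mul_eq_one hA h1).1
  rw [hgk', hk1, mul_one]

private lemma lcoset_rep (hc : IsCancellative M) (hA : IsAtomicMon M) (N : Submonoid M)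
    {g g' : M} (h : LCoset N g = LCoset N g') : g = g' := by
  have hg : g ∈ LCoset N g' := h ▸ ⟨1, N.one_mem, (one_mul g).symm⟩
  have hg' : g' ∈ LCoset N g := h.symm ▸ ⟨1, N.one_mem, (one_mul g').symm⟩
  obtain ⟨k, _, hgk⟩ := hg
  obtain ⟨k', hk', hgk'⟩ := hg'
  have heq : (k * k') * g = 1 * g := by rw [one_mul, mul_assoc, ← hgk', ← hgk]
  have h1 : k * k' = 1 := hc _ _ 1 g (by simpa using heq)
  have hk1 := (atomic_mul_eq_one hA h1).1
  rw [hgk, hk1, one_mul]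

private lemma rnoeth (hc : IsCancellative M) (hA : IsAtomicMon M) (N : Submonoid M) :
    ¬ ∃ f : ℕ → Set M, ∀ n : ℕ, RReduces N (f n) (f (n + 1)) := by
  obtain ⟨ν, hpos, hadd⟩ := id hA
  rintro ⟨f, hf⟩
  choose g₁ g₂ hA' hB hmem hnmem using hf
  have heq : ∀ n, g₂ (n + 1) = g₁ n := fun n =>
    rcoset_rep hc hA N ((hB (n + 1)).symm.trans (hA' n))
  have hlt : ∀ n, ν (g₁ n) < ν (g₂ n) := by
    intro n
    obtain ⟨h, _, hgh⟩ := hmem n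
    have hne : h ≠ 1 := by
      rintro rfl
      apply hnmem n
      rw [mul_one] at hgh
      rw [hgh]
      exact ⟨1, N.one_mem, (mul_one _).symm⟩
    have h2 := hadd (g₁ n) h
    have h3 := hpos h hne
    rw [← hgh] at h2
    omega
  exact no_descent (fun n => ν (g₂ n)) (fun n => by
    show ν (g₂ (n + 1)) < ν (g₂ n)
    rw [heq n]; exact hlt n)

private lemma lnoeth (hc : IsCancellative M) (hA : IsAtomicMon M) (N : Submonoid M) :
    ¬ ∃ f : ℕ → Set M, ∀ n : ℕ, LReduces N (f n) (f (n + 1)) := by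
  obtain ⟨ν, hpos, hadd⟩ := id hA
  rintro ⟨f, hf⟩
  choose g₁ g₂ hA' hB hmem hnmem using hf
  have heq : ∀ n, g₂ (n + 1) = g₁ n := fun n =>
    lcoset_rep hc hA N ((hB (n + 1)).symm.trans (hA' n))
  have hlt : ∀ n, ν (g₁ n) < ν (g₂ n) := by
    intro n
    obtain ⟨h, _, hgh⟩ := hmem n
    have hne : h ≠ 1 := by
      rintro rfl
      apply hnmem n
      rw [one_mul] at hgh
      rw [hgh]
      exact ⟨1, N.one_mem, (one_mul _).symm⟩
    have h2 := hadd h (g₁ n)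
    have h3 := hpos h hne
    rw [← hgh] at h2
    omega
  exact no_descent (fun n => ν (g₂ n)) (fun n => by
    show ν (g₂ (n + 1)) < ν (g₂ n)
    rw [heq n]; exact hlt n)

private lemma rstep_or_refl (hc : IsCancellative M) (hA : IsAtomicMon M) (N : Submonoid M)
    {a d x : M} (hax : a = d * x) (hxN : x ∈ N) :
    Relation.ReflTransGen (RReduces N) (RCoset N a) (RCoset N d) := by
  by_cases hcase : d ∈ RCoset N a
  · obtain ⟨k, _, hdk⟩ := hcase
    have heq : a * (k * x) = a * 1 := by rw [mul_one, ← mul_assoc, ← hdk, ← hax]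
    have h1 : k * x = 1 := hc _ _ a 1 (by simpa using heq)
    have hk1 := (atomic_mul_eq_one hA h1).1
    rw [hdk, hk1, mul_one]
  · exact Relation.ReflTransGen.single ⟨d, a, rfl, rfl, ⟨x, hxN, hax⟩, hcase⟩

private lemma lstep_or_refl (hc : IsCancellative M) (hA : IsAtomicMon M) (N : Submonoid M)
    {a d x : M} (hax : a = x * d) (hxN : x ∈ N) :
    Relation.ReflTransGen (LReduces N) (LCoset N a) (LCoset N d) := by
  by_cases hcase : d ∈ LCoset N a
  · obtain ⟨k, _, hdk⟩ := hcase
    have heq : (x * k) * a = 1 * a := by rw [one_mul, mul_assoc, ← hdk, ← hax]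
    have h1 : x * k = 1 := hc _ _ 1 a (by simpa using heq)
    have hk1 := (atomic_mul_eq_one hA h1).2
    rw [hdk, hk1, one_mul]
  · exact Relation.ReflTransGen.single ⟨d, a, rfl, rfl, ⟨x, hxN, hax⟩, hcase⟩

end Aux

/-- **Lemma 3.9.** A parabolic submonoid `N` of a preGarside monoid `M` has the
confluence property; moreover each minimal `R_N`-class (resp. `L_N`-class) has a
unique representative. -/
theorem lemma_3_9 {M : Type*} [Monoid M] (hM : IsPreGarside M) (N : Submonoid M)
    (hN : IsParabolic N) :
    Confluence N ∧
    (∀ C : Set M, IsMinimalRCoset N C → ∃! g : M, C = RCoset N g) ∧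
    (∀ C : Set M, IsMinimalLCoset N C → ∃! g : M, C = LCoset N g) := by
  obtain ⟨hc, hA, hL, hR⟩ := hM
  obtain ⟨hSp, hPL, hPR⟩ := hN
  refine ⟨⟨⟨rnoeth hc hA N, ?_⟩, ⟨lnoeth hc hA N, ?_⟩⟩, ?_, ?_⟩
  · -- R local confluence
    intro C A B hCA hCB
    obtain ⟨a₁, a₂, hAeq, hC₁, ⟨h₁, hh₁, ha⟩, _⟩ := hCA
    obtain ⟨b₁, b₂, hBeq, hC₂, ⟨h₂, hh₂, hb⟩, _⟩ := hCB
    have hab : a₂ = b₂ := rcoset_rep hc hA N (hC₁.symm.trans hC₂)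
    subst hab
    obtain ⟨m, hm₁, hm₂, hml⟩ := hR h₁ h₂ ⟨a₂, ⟨a₁, ha⟩, ⟨b₁, hb⟩⟩
    have hmN : m ∈ N := hPR h₁ h₂ m hh₁ hh₂ ⟨hm₁, hm₂, hml⟩
    obtain ⟨d, hd⟩ := hml a₂ ⟨a₁, ha⟩ ⟨b₁, hb⟩
    obtain ⟨x, hx⟩ := hm₁
    obtain ⟨y, hy⟩ := hm₂
    have hxN : x ∈ N := (hSp x h₁ (hx ▸ hmN)).1
    have hyN : y ∈ N := (hSp y h₂ (hy ▸ hmN)).1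
    have hax : a₁ = d * x := by
      refine (hc a₁ (d * x) 1 h₁ ?_).symm.symm
      have : a₁ * h₁ = d * x * h₁ := by
        rw [mul_assoc, ← hx, ← hd, ← ha]
      simpa using this
    have hby : b₁ = d * y := by
      refine (hc b₁ (d * y) 1 h₂ ?_).symm.symm
      have : b₁ * h₂ = d * y * h₂ := by
        rw [mul_assoc, ← hy, ← hd, ← hb]
      simpa using this
    refine ⟨RCoset N d, ?_, ?_⟩
    · rw [hAeq]; exact rstep_or_refl hc hA N hax hxN
    · rw [hBeq]; exact rstep_or_refl hc hA N hby hyN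
  · -- L local confluence
    intro C A B hCA hCB
    obtain ⟨a₁, a₂, hAeq, hC₁, ⟨h₁, hh₁, ha⟩, _⟩ := hCA
    obtain ⟨b₁, b₂, hBeq, hC₂, ⟨h₂, hh₂, hb⟩, _⟩ := hCB
    have hab : a₂ = b₂ := lcoset_rep hc hA N (hC₁.symm.trans hC₂)
    subst hab
    obtain ⟨m, hm₁, hm₂, hml⟩ := hL h₁ h₂ ⟨a₂, ⟨a₁, ha⟩, ⟨b₁, hb⟩⟩
    have hmN : m ∈ N := hPL h₁ h₂ m hh₁ hh₂ ⟨hm₁, hm₂, hml⟩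
    obtain ⟨d, hd⟩ := hml a₂ ⟨a₁, ha⟩ ⟨b₁, hb⟩
    obtain ⟨x, hx⟩ := hm₁
    obtain ⟨y, hy⟩ := hm₂
    have hxN : x ∈ N := (hSp h₁ x (hx ▸ hmN)).2
    have hyN : y ∈ N := (hSp h₂ y (hy ▸ hmN)).2
    have hax : a₁ = x * d := by
      refine (hc a₁ (x * d) h₁ 1 ?_).symm.symm
      have : h₁ * a₁ = h₁ * (x * d) := by
        rw [← mul_assoc, ← hx, ← hd, ← ha]
      simpa using this
    have hby : b₁ = y * d := by
      refine (hc b₁ (y * d) h₂ 1 ?_).symm.symm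
      have : h₂ * b₁ = h₂ * (y * d) := by
        rw [← mul_assoc, ← hy, ← hd, ← hb]
      simpa using this
    refine ⟨LCoset N d, ?_, ?_⟩
    · rw [hAeq]; exact lstep_or_refl hc hA N hax hxN
    · rw [hBeq]; exact lstep_or_refl hc hA N hby hyN
  · rintro C ⟨⟨g, hg⟩, -⟩
    exact ⟨g, hg, fun g' hg' => rcoset_rep hc hA N (hg'.symm.trans hg)⟩
  · rintro C ⟨⟨g, hg⟩, -⟩
    exact ⟨g, hg, fun g' hg' => lcoset_rep hc hA N (hg'.symm.trans hg)⟩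

end PG
end
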